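/- arXiv:1910.06508 — 7 statements merged into one kernel-verified Lean document; each statement's English description precedes it below -/
import Mathlib

section
/- Let (Ω, ℱ, P) be a probability space, let ρ ≥ 0 and G be real random variables with Gρ square-integrable and G·E[ρ|𝒢] square-integrable, and let 𝒢 ⊆ ℋ be sub-σ-algebras of ℱ such that G is ℋ-measurable and E[ρ | ℋ] = E[ρ | 𝒢] almost surely (i.e., ρ is conditionally mean-independent of G given 𝒢). Then E[G · E[ρ | 𝒢]] = E[G ρ] and Var(G · E[ρ | 𝒢]) ≤ Var(G ρ). -/
open MeasureTheory

private lemma integrable_mul_of_memL2 {Ω : Type*} {m0 : MeasurableSpace Ω} {P : Measure Ω}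
    {f g : Ω → ℝ} (hf : MemLp f 2 P) (hg : MemLp g 2 P) :
    Integrable (fun ω => f ω * g ω) P := by
  refine Integrable.mono' ((hf.integrable_sq.add hg.integrable_sq).div_const 2)
    (hf.aestronglyMeasurable.mul hg.aestronglyMeasurable) ?_
  filter_upwards with ω
  simp only [Pi.add_apply, Real.norm_eq_abs, abs_mul]
  nlinarith [sq_nonneg (|f ω| - |g ω|), sq_abs (f ω), sq_abs (g ω),
    abs_nonneg (f ω), abs_nonneg (g ω)]

/-- Conditional Monte Carlo variance reduction. If `ρ ≥ 0`, `Gρ` and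
`G·E[ρ|𝒢]` are square-integrable, `𝒢 ⊆ ℋ` are sub-σ-algebras of `ℱ`, `G` is
`ℋ`-measurable and `E[ρ|ℋ] = E[ρ|𝒢]` a.s., then `E[G·E[ρ|𝒢]] = E[Gρ]` and
`Var(G·E[ρ|𝒢]) ≤ Var(Gρ)`, where `Var(X) := E[X²] − (E[X])²`. -/
theorem conditional_monte_carlo_variance_reduction
    {Ω : Type*} {m0 : MeasurableSpace Ω} (P : Measure Ω) [IsProbabilityMeasure P]
    (𝒢 ℋ : MeasurableSpace Ω) (h𝒢ℋ : 𝒢 ≤ ℋ) (hℋ : ℋ ≤ m0)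
    (ρ G : Ω → ℝ)
    (hρ_nonneg : ∀ ω, 0 ≤ ρ ω) (hρ_int : Integrable ρ P)
    (hG_meas : Measurable[ℋ] G)
    (hGρ_sq : MemLp (fun ω => G ω * ρ ω) 2 P)
    (hGcond_sq : MemLp (fun ω => G ω * (P[ρ|𝒢]) ω) 2 P)
    (h_mean_indep : P[ρ|ℋ] =ᵐ[P] P[ρ|𝒢]) :
    (∫ ω, G ω * (P[ρ|𝒢]) ω ∂P) = (∫ ω, G ω * ρ ω ∂P) ∧
    ((∫ ω, (G ω * (P[ρ|𝒢]) ω) ^ 2 ∂P) - (∫ ω, G ω * (P[ρ|𝒢]) ω ∂P) ^ 2)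
      ≤ ((∫ ω, (G ω * ρ ω) ^ 2 ∂P) - (∫ ω, G ω * ρ ω ∂P) ^ 2) := by
  have hY_int : Integrable (fun ω => G ω * ρ ω) P := hGρ_sq.integrable one_le_two
  have hX_int : Integrable (fun ω => G ω * (P[ρ|𝒢]) ω) P := hGcond_sq.integrable one_le_two
  -- pull-out property: P[Gρ|ℋ] =ᵐ G · P[ρ|ℋ]
  have h1 : P[(fun ω => G ω * ρ ω)|ℋ] =ᵐ[P] G * P[ρ|ℋ] :=
    condExp_mul_of_stronglyMeasurable_left hG_meas.stronglyMeasurable hY_int hρ_int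
  have hXcond : (fun ω => G ω * (P[ρ|𝒢]) ω) =ᵐ[P] P[(fun ω => G ω * ρ ω)|ℋ] := by
    filter_upwards [h1, h_mean_indep] with ω h1ω h2ω
    simp only [Pi.mul_apply] at h1ω
    rw [h1ω, h2ω]
  -- equality of means
  have hmean : (∫ ω, G ω * (P[ρ|𝒢]) ω ∂P) = (∫ ω, G ω * ρ ω ∂P) := by
    rw [integral_congr_ae hXcond, integral_condExp hℋ]
  -- X is ℋ-measurable
  have hX_meas : StronglyMeasurable[ℋ] (fun ω => G ω * (P[ρ|𝒢]) ω) :=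
    hG_meas.stronglyMeasurable.mul (stronglyMeasurable_condExp.mono h𝒢ℋ)
  have hXY_int : Integrable (fun ω => (G ω * (P[ρ|𝒢]) ω) * (G ω * ρ ω)) P :=
    integrable_mul_of_memL2 hGcond_sq hGρ_sq
  have h2 : P[(fun ω => (G ω * (P[ρ|𝒢]) ω) * (G ω * ρ ω))|ℋ] =ᵐ[P]
      (fun ω => G ω * (P[ρ|𝒢]) ω) * P[(fun ω => G ω * ρ ω)|ℋ] :=
    condExp_mul_of_stronglyMeasurable_left hX_meas hXY_int hY_int
  have hXY_eq : (∫ ω, (G ω * (P[ρ|𝒢]) ω) * (G ω * ρ ω) ∂P)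
      = ∫ ω, (G ω * (P[ρ|𝒢]) ω) ^ 2 ∂P := by
    rw [← integral_condExp hℋ, integral_congr_ae h2]
    refine integral_congr_ae ?_
    filter_upwards [hXcond] with ω hω
    simp only [Pi.mul_apply]
    rw [← hω]; ring
  have hX2 := hGcond_sq.integrable_sq
  have hY2 := hGρ_sq.integrable_sq
  have hnn : (0:ℝ) ≤ ∫ ω, (G ω * ρ ω - G ω * (P[ρ|𝒢]) ω) ^ 2 ∂P :=
    integral_nonneg fun ω => sq_nonneg _
  have hexp : (∫ ω, (G ω * ρ ω - G ω * (P[ρ|𝒢]) ω) ^ 2 ∂P)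
      = (∫ ω, (G ω * ρ ω) ^ 2 ∂P)
        - 2 * (∫ ω, (G ω * (P[ρ|𝒢]) ω) * (G ω * ρ ω) ∂P)
        + ∫ ω, (G ω * (P[ρ|𝒢]) ω) ^ 2 ∂P := by
    have hpt : ∀ ω, (G ω * ρ ω - G ω * (P[ρ|𝒢]) ω) ^ 2
        = ((G ω * ρ ω) ^ 2 - 2 * ((G ω * (P[ρ|𝒢]) ω) * (G ω * ρ ω)))
          + (G ω * (P[ρ|𝒢]) ω) ^ 2 := fun ω => by ring
    simp_rw [hpt]
    have hA : Integrable
        (fun ω => (G ω * ρ ω) ^ 2 - 2 * (G ω * (P[ρ|𝒢]) ω * (G ω * ρ ω))) P :=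
      hY2.sub (hXY_int.const_mul 2)
    rw [integral_add hA hX2, integral_sub hY2 (hXY_int.const_mul 2), integral_const_mul]
  refine ⟨hmean, ?_⟩
  rw [hmean]
  have : (∫ ω, (G ω * (P[ρ|𝒢]) ω) ^ 2 ∂P) ≤ ∫ ω, (G ω * ρ ω) ^ 2 ∂P := by
    rw [hexp, hXY_eq] at hnn; linarith
  linarith
end

section
/- In the likelihood-ratio filtration setup, suppose that for each t = 1, …, T there is a sub-σ-algebra 𝒢_t of ℱ such that E[ρ_{1:t} | 𝒢_t ∨ σ(r_t)] = E[ρ_{1:t} | 𝒢_t] almost surely (r_t is conditionally mean-independent of ρ_{1:t} given 𝒢_t). Then E[ ρ_{1:T} ∑_{t=1}^T γ^{t−1} r_t ] = E[ ∑_{t=1}^T γ^{t−1} r_t · E[ρ_{1:t} | 𝒢_t] ]; in particular every extended conditional importance-sampling estimator ∑_{t=1}^T γ^{t−1} r_t E[ρ_{1:t}|𝒢_t] has the same expectation as the crude importance-sampling estimator. -/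
open MeasureTheory Finset

/-- In the likelihood-ratio filtration setup, if for each `t` there is a
sub-σ-algebra `𝒢_t` with `E[ρ_{1:t} | 𝒢_t ∨ σ(r_t)] = E[ρ_{1:t} | 𝒢_t]` a.s., then the
crude IS estimator and every extended conditional IS estimator
`∑_t γ^{t−1} r_t E[ρ_{1:t}|𝒢_t]` have the same expectation. -/
theorem extended_conditional_is_unbiased
    {Ω : Type*} {m0 : MeasurableSpace Ω} (P : Measure Ω) [IsProbabilityMeasure P]
    (T : ℕ) (ℱ : MeasureTheory.Filtration ℕ m0)
    (γ : ℝ) (hγ : γ ∈ Set.Ioc (0 : ℝ) 1)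
    (ρ : ℕ → Ω → ℝ)
    (hρ_meas : ∀ t, 1 ≤ t → t ≤ T → Measurable[ℱ t] (ρ t))
    (hρ_nonneg : ∀ t ω, 0 ≤ ρ t ω)
    (hρ_int : ∀ t, 1 ≤ t → t ≤ T → Integrable (ρ t) P)
    (hρ_cond : ∀ t, 1 ≤ t → t ≤ T → P[ρ t | ℱ (t - 1)] =ᵐ[P] fun _ => (1 : ℝ))
    (ρprod : ℕ → Ω → ℝ)
    (hρprod : ∀ t ω, ρprod t ω = ∏ k ∈ Icc 1 t, ρ k ω)
    (r : ℕ → Ω → ℝ)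
    (hr_meas : ∀ t, 1 ≤ t → t ≤ T → Measurable[ℱ t] (r t))
    (hr_range : ∀ t ω, r t ω ∈ Set.Icc (0 : ℝ) 1)
    (hρprod_sq : ∀ t, 1 ≤ t → t ≤ T → MemLp (ρprod t) 2 P)
    (𝒢 : ℕ → MeasurableSpace Ω)
    (h𝒢 : ∀ t, 1 ≤ t → t ≤ T → 𝒢 t ≤ m0)
    (h_mean_indep : ∀ t, 1 ≤ t → t ≤ T →
      P[ρprod t | 𝒢 t ⊔ MeasurableSpace.comap (r t) (borel ℝ)]
        =ᵐ[P] P[ρprod t | 𝒢 t]) :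
    (∫ ω, ρprod T ω * ∑ t ∈ Icc 1 T, γ ^ (t - 1) * r t ω ∂P)
      = ∫ ω, ∑ t ∈ Icc 1 T, γ ^ (t - 1) * r t ω * (P[ρprod t | 𝒢 t]) ω ∂P := by
  have hρprod_fun : ∀ t, ρprod t = fun ω => ∏ k ∈ Icc 1 t, ρ k ω := fun t => funext (hρprod t)
  -- measurability of partial products
  have hρprod_meas : ∀ t, t ≤ T → Measurable[ℱ t] (ρprod t) := by
    intro t ht
    rw [hρprod_fun]
    refine Finset.measurable_prod _ fun k hk => ?_
    obtain ⟨hk1, hk2⟩ := Finset.mem_Icc.mp hk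
    exact (hρ_meas k hk1 (hk2.trans ht)).mono (ℱ.mono hk2) le_rfl
  have hρprod_m0 : ∀ t, t ≤ T → Measurable (ρprod t) :=
    fun t ht => (hρprod_meas t ht).mono (ℱ.le t) le_rfl
  -- integrability of partial products
  have hρprod_int : ∀ t, t ≤ T → Integrable (ρprod t) P := by
    intro t ht
    rcases Nat.eq_zero_or_pos t with h | h
    · subst h
      rw [hρprod_fun]
      simpa using (integrable_const (1 : ℝ) : Integrable (fun _ : Ω => (1:ℝ)) P)
    · exact (hρprod_sq t h ht).integrable one_le_two
  -- one-step martingale property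
  have h_step : ∀ s, s + 1 ≤ T → P[ρprod (s + 1) | ℱ s] =ᵐ[P] ρprod s := by
    intro s hs
    have hmul : ρprod (s + 1) = ρprod s * ρ (s + 1) := by
      funext ω
      simp only [hρprod, Pi.mul_apply]
      rw [Finset.prod_Icc_succ_top (Nat.le_add_left 1 s)]
    have hsm : StronglyMeasurable[ℱ s] (ρprod s) :=
      (hρprod_meas s (le_trans (Nat.le_succ s) hs)).stronglyMeasurable
    have hint1 : Integrable (ρprod s * ρ (s + 1)) P := by
      rw [← hmul]; exact hρprod_int (s + 1) hs
    have h1 := condExp_mul_of_stronglyMeasurable_left hsm hint1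
      (hρ_int (s + 1) (Nat.succ_le_succ (Nat.zero_le s)) hs)
    have h2 := hρ_cond (s + 1) (Nat.succ_le_succ (Nat.zero_le s)) hs
    rw [Nat.add_sub_cancel] at h2
    rw [hmul]
    refine h1.trans ?_
    filter_upwards [h2] with ω hω
    simp [hω]
  -- full martingale property
  have h_mart : ∀ t n, t + n ≤ T → P[ρprod (t + n) | ℱ t] =ᵐ[P] ρprod t := by
    intro t n
    induction n with
    | zero =>
      intro ht
      simp only [Nat.add_zero] at ht ⊢
      rw [condExp_of_stronglyMeasurable (ℱ.le t)
        ((hρprod_meas t ht).stronglyMeasurable) (hρprod_int t ht)]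
    | succ n ih =>
      intro ht
      have h1 : P[ρprod (t + n + 1) | ℱ t]
          =ᵐ[P] P[P[ρprod (t + n + 1) | ℱ (t + n)] | ℱ t] :=
        (condExp_condExp_of_le (ℱ.mono (Nat.le_add_right t n)) (ℱ.le (t + n))).symm
      have h2 := condExp_congr_ae (μ := P) (m := ℱ t) (h_step (t + n) (by omega))
      exact h1.trans (h2.trans (ih (by omega)))
  -- key per-term equality
  have key : ∀ t, 1 ≤ t → t ≤ T →
      ∫ ω, r t ω * ρprod T ω ∂P = ∫ ω, r t ω * (P[ρprod t | 𝒢 t]) ω ∂P := by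
    intro t h1 h2
    have hrm0 : Measurable (r t) := (hr_meas t h1 h2).mono (ℱ.le t) le_rfl
    have hr_bdd : ∀ ω, ‖r t ω‖ ≤ 1 := fun ω =>
      abs_le.mpr ⟨by linarith [(hr_range t ω).1], (hr_range t ω).2⟩
    -- Step A : reduce ρprod T to ρprod t via the martingale property
    have hintT : Integrable (r t * ρprod T) P :=
      (hρprod_int T le_rfl).bdd_mul hrm0.aestronglyMeasurable (ae_of_all _ hr_bdd)
    have hmartT : P[ρprod T | ℱ t] =ᵐ[P] ρprod t := by
      have := h_mart t (T - t) (by omega)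
      rwa [Nat.add_sub_cancel' h2] at this
    have hA : ∫ ω, (r t * ρprod T) ω ∂P = ∫ ω, (r t * ρprod t) ω ∂P := by
      rw [← integral_condExp (μ := P) (f := r t * ρprod T) (ℱ.le t)]
      have e2 : P[r t * ρprod T | ℱ t] =ᵐ[P] r t * P[ρprod T | ℱ t] :=
        condExp_mul_of_stronglyMeasurable_left (hr_meas t h1 h2).stronglyMeasurable hintT
          (hρprod_int T le_rfl)
      refine integral_congr_ae (e2.trans ?_)
      filter_upwards [hmartT] with ω hω
      simp [hω]
    -- Step B : conditional mean independence
    set m : MeasurableSpace Ω := 𝒢 t ⊔ MeasurableSpace.comap (r t) (borel ℝ) with hm_def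
    have hcomap_le : MeasurableSpace.comap (r t) (borel ℝ) ≤ ℱ t := by
      intro s hs
      obtain ⟨u, hu, rfl⟩ := hs
      exact hr_meas t h1 h2 hu
    have hm_le : m ≤ m0 := sup_le (h𝒢 t h1 h2) (hcomap_le.trans (ℱ.le t))
    have hr_m : Measurable[m] (r t) :=
      Measurable.of_comap_le (le_sup_right (a := 𝒢 t))
    have hint_t : Integrable (r t * ρprod t) P :=
      (hρprod_int t h2).bdd_mul hrm0.aestronglyMeasurable (ae_of_all _ hr_bdd)
    have hB : ∫ ω, (r t * ρprod t) ω ∂P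
        = ∫ ω, (r t * P[ρprod t | 𝒢 t]) ω ∂P := by
      rw [← integral_condExp (μ := P) (f := r t * ρprod t) hm_le]
      have e2 : P[r t * ρprod t | m] =ᵐ[P] r t * P[ρprod t | m] :=
        condExp_mul_of_stronglyMeasurable_left hr_m.stronglyMeasurable hint_t (hρprod_int t h2)
      refine integral_congr_ae (e2.trans ?_)
      filter_upwards [h_mean_indep t h1 h2] with ω hω
      simp only [Pi.mul_apply]
      rw [← hm_def] at hω
      rw [hω]
    exact hA.trans hB
  -- assemble
  have hrm0' : ∀ t, 1 ≤ t → t ≤ T → Measurable (r t) :=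
    fun t h1 h2 => (hr_meas t h1 h2).mono (ℱ.le t) le_rfl
  have hr_bdd' : ∀ t ω, ‖r t ω‖ ≤ 1 := fun t ω =>
    abs_le.mpr ⟨by linarith [(hr_range t ω).1], (hr_range t ω).2⟩
  have hL : (∫ ω, ρprod T ω * ∑ t ∈ Icc 1 T, γ ^ (t - 1) * r t ω ∂P)
      = ∑ t ∈ Icc 1 T, γ ^ (t - 1) * ∫ ω, r t ω * ρprod T ω ∂P := by
    have : (fun ω => ρprod T ω * ∑ t ∈ Icc 1 T, γ ^ (t - 1) * r t ω)
        = fun ω => ∑ t ∈ Icc 1 T, γ ^ (t - 1) * (r t ω * ρprod T ω) := by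
      funext ω
      rw [Finset.mul_sum]
      exact Finset.sum_congr rfl fun t _ => by ring
    rw [this, integral_finset_sum]
    · exact Finset.sum_congr rfl fun t _ => integral_const_mul _ _
    · intro t ht
      obtain ⟨h1, h2⟩ := Finset.mem_Icc.mp ht
      exact (((hρprod_int T le_rfl).bdd_mul (hrm0' t h1 h2).aestronglyMeasurable
        (ae_of_all _ (hr_bdd' t))).const_mul _)
  have hR : (∫ ω, ∑ t ∈ Icc 1 T, γ ^ (t - 1) * r t ω * (P[ρprod t | 𝒢 t]) ω ∂P)
      = ∑ t ∈ Icc 1 T, γ ^ (t - 1) * ∫ ω, r t ω * (P[ρprod t | 𝒢 t]) ω ∂P := by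
    have : (fun ω => ∑ t ∈ Icc 1 T, γ ^ (t - 1) * r t ω * (P[ρprod t | 𝒢 t]) ω)
        = fun ω => ∑ t ∈ Icc 1 T, γ ^ (t - 1) * (r t ω * (P[ρprod t | 𝒢 t]) ω) := by
      funext ω
      exact Finset.sum_congr rfl fun t _ => by ring
    rw [this, integral_finset_sum]
    · exact Finset.sum_congr rfl fun t _ => integral_const_mul _ _
    · intro t ht
      obtain ⟨h1, h2⟩ := Finset.mem_Icc.mp ht
      exact ((integrable_condExp.bdd_mul (hrm0' t h1 h2).aestronglyMeasurable
        (ae_of_all _ (hr_bdd' t))).const_mul _)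
  rw [hL, hR]
  exact Finset.sum_congr rfl fun t ht => by
    obtain ⟨h1, h2⟩ := Finset.mem_Icc.mp ht
    rw [key t h1 h2]
end

section
/- Let (Ω, ℱ, P) be a probability space, Y_1, …, Y_T square-integrable real random variables, 𝒢_1, …, 𝒢_T sub-σ-algebras of ℱ, and Z_t := E[Y_t | 𝒢_t]. If Cov(Y_t, Y_k) ≥ Cov(Z_t, Z_k) for all 1 ≤ t < k ≤ T, then Var(∑_{t=1}^T Z_t) ≤ Var(∑_{t=1}^T Y_t). (Applied with Y_t = γ^{t−1} ρ_{1:t} r_t the per-decision importance-sampling summands and 𝒢_t = σ(s_t, a_t, r_t), so that Z_t are the stationary importance-sampling summands, this gives Var(v̂_SIS) ≤ Var(v̂_PDIS) under the stated covariance ordering.) -/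
open MeasureTheory Finset

lemma memℒp_two_condexp_aux {Ω : Type*} {m m0 : MeasurableSpace Ω} (hm : m ≤ m0)
    {μ : Measure Ω} [IsProbabilityMeasure μ] {f : Ω → ℝ} (hf : MemLp f 2 μ) :
    MemLp (μ[f|m]) 2 μ := by
  set g : Lp ℝ 2 μ := (condExpL2 ℝ ℝ hm (hf.toLp f) : Lp ℝ 2 μ) with hg
  have hae : (g : Ω → ℝ) =ᵐ[μ] μ[f|m] := by
    refine ae_eq_condExp_of_forall_setIntegral_eq hm (hf.integrable one_le_two)
      (fun s _ _ => ((Lp.memLp g).integrable one_le_two).integrableOn)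
      (fun s hs hμs => ?_) ?_
    · rw [hg, integral_condExpL2_eq hm (hf.toLp f) hs hμs.ne]
      exact setIntegral_congr_ae (hm s hs) (hf.coeFn_toLp.mono fun x hx _ => hx)
    · exact aestronglyMeasurable_condExpL2 hm _
  exact (Lp.memLp g).ae_eq hae

lemma integrable_mul_of_memℒp_two {Ω : Type*} {m0 : MeasurableSpace Ω}
    {μ : Measure Ω} {f g : Ω → ℝ} (hf : MemLp f 2 μ) (hg : MemLp g 2 μ) :
    Integrable (fun ω => f ω * g ω) μ := by
  have h1 : (1 : ENNReal) / 1 = 1 / 2 + 1 / 2 := by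
    rw [ENNReal.div_add_div_same]
    norm_num
    rw [ENNReal.div_self (by norm_num) (by norm_num)]
  have : MemLp (f • g) 1 μ := haveI : ENNReal.HolderTriple 2 2 1 := ⟨by rw [inv_one]; exact ENNReal.inv_two_add_inv_two⟩; MemLp.smul hg hf
  exact memLp_one_iff_integrable.mp this

/-- If `Z_t := E[Y_t | 𝒢_t]` and `Cov(Y_t, Y_k) ≥ Cov(Z_t, Z_k)` for all
`t < k`, then `Var(∑ Z_t) ≤ Var(∑ Y_t)`, where `Var(X) := E[X²] − (E[X])²` and
`Cov(X,Y) := E[XY] − E[X]E[Y]`. -/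
theorem variance_of_sum_condexp_le_of_cov_le
    {Ω : Type*} {m0 : MeasurableSpace Ω} (P : Measure Ω) [IsProbabilityMeasure P]
    (T : ℕ) (Y : Fin T → Ω → ℝ) (hY : ∀ t, MemLp (Y t) 2 P)
    (𝒢 : Fin T → MeasurableSpace Ω) (h𝒢 : ∀ t, 𝒢 t ≤ m0)
    (Z : Fin T → Ω → ℝ) (hZ : ∀ t, Z t = P[Y t | 𝒢 t])
    (hcov : ∀ t k : Fin T, t < k →
      (∫ ω, Z t ω * Z k ω ∂P) - (∫ ω, Z t ω ∂P) * (∫ ω, Z k ω ∂P)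
        ≤ (∫ ω, Y t ω * Y k ω ∂P) - (∫ ω, Y t ω ∂P) * (∫ ω, Y k ω ∂P)) :
    (∫ ω, (∑ t, Z t ω) ^ 2 ∂P) - (∫ ω, ∑ t, Z t ω ∂P) ^ 2
      ≤ (∫ ω, (∑ t, Y t ω) ^ 2 ∂P) - (∫ ω, ∑ t, Y t ω ∂P) ^ 2 := by
  have hZ2 : ∀ t, MemLp (Z t) 2 P := by
    intro t; rw [hZ t]; exact memℒp_two_condexp_aux (h𝒢 t) (hY t)
  -- expansion of variance of a sum
  have expand : ∀ (X : Fin T → Ω → ℝ), (∀ t, MemLp (X t) 2 P) →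
      (∫ ω, (∑ t, X t ω) ^ 2 ∂P) - (∫ ω, ∑ t, X t ω ∂P) ^ 2
        = ∑ t, ∑ k, ((∫ ω, X t ω * X k ω ∂P) - (∫ ω, X t ω ∂P) * (∫ ω, X k ω ∂P)) := by
    intro X hX
    have h1 : (∫ ω, (∑ t, X t ω) ^ 2 ∂P) = ∑ t, ∑ k, ∫ ω, X t ω * X k ω ∂P := by
      rw [show (fun ω => (∑ t, X t ω) ^ 2) = fun ω => ∑ t, ∑ k, X t ω * X k ω by
        funext ω; rw [sq, Finset.sum_mul_sum]]
      rw [integral_finset_sum _ fun t _ => integrable_finset_sum _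
        fun k _ => integrable_mul_of_memℒp_two (hX t) (hX k)]
      exact Finset.sum_congr rfl fun t _ => integral_finset_sum _
        fun k _ => integrable_mul_of_memℒp_two (hX t) (hX k)
    have h2 : (∫ ω, ∑ t, X t ω ∂P) = ∑ t, ∫ ω, X t ω ∂P :=
      integral_finset_sum _ fun t _ => (hX t).integrable one_le_two
    rw [h1, h2, sq, Finset.sum_mul_sum, ← Finset.sum_sub_distrib]
    exact Finset.sum_congr rfl fun t _ => (Finset.sum_sub_distrib _ _).symm
  rw [expand Y hY, expand Z hZ2]
  refine Finset.sum_le_sum fun t _ => Finset.sum_le_sum fun k _ => ?_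
  rcases lt_trichotomy t k with h | h | h
  · exact hcov t k h
  · -- diagonal case
    subst h
    have hEq : ∫ ω, Z t ω ∂P = ∫ ω, Y t ω ∂P := by
      rw [hZ t]; exact integral_condExp (h𝒢 t)
    have hZY : ∫ ω, Z t ω * Y t ω ∂P = ∫ ω, Z t ω * Z t ω ∂P := by
      have hsm : StronglyMeasurable[𝒢 t] (P[Y t | 𝒢 t]) := stronglyMeasurable_condExp
      have hint : Integrable ((P[Y t | 𝒢 t]) * Y t) P := by
        have := integrable_mul_of_memℒp_two (hZ2 t) (hY t)
        rwa [hZ t] at this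
      have hpull : P[(P[Y t | 𝒢 t]) * Y t | 𝒢 t]
          =ᵐ[P] (P[Y t | 𝒢 t]) * P[Y t | 𝒢 t] :=
        condExp_mul_of_stronglyMeasurable_left hsm hint ((hY t).integrable one_le_two)
      calc ∫ ω, Z t ω * Y t ω ∂P
          = ∫ ω, ((P[Y t | 𝒢 t]) * Y t) ω ∂P := by rw [hZ t]; rfl
        _ = ∫ ω, (P[(P[Y t | 𝒢 t]) * Y t | 𝒢 t]) ω ∂P :=
            (integral_condExp (h𝒢 t)).symm
        _ = ∫ ω, ((P[Y t | 𝒢 t]) * P[Y t | 𝒢 t]) ω ∂P := integral_congr_ae hpull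
        _ = ∫ ω, Z t ω * Z t ω ∂P := by rw [hZ t]; rfl
    have hsq : ∫ ω, Z t ω * Z t ω ∂P ≤ ∫ ω, Y t ω * Y t ω ∂P := by
      have hnn : 0 ≤ ∫ ω, (Y t ω - Z t ω) ^ 2 ∂P :=
        integral_nonneg fun ω => sq_nonneg _
      have hiYY := integrable_mul_of_memℒp_two (hY t) (hY t)
      have hiZY := integrable_mul_of_memℒp_two (hZ2 t) (hY t)
      have hiZZ := integrable_mul_of_memℒp_two (hZ2 t) (hZ2 t)
      have e0 : ∫ ω, (Y t ω - Z t ω) ^ 2 ∂P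
          = ∫ ω, (Y t ω * Y t ω + Z t ω * Z t ω) - 2 * (Z t ω * Y t ω) ∂P := by
        congr 1; funext ω; ring
      have e1 : ∫ ω, (Y t ω * Y t ω + Z t ω * Z t ω) - 2 * (Z t ω * Y t ω) ∂P
          = (∫ ω, Y t ω * Y t ω + Z t ω * Z t ω ∂P) - ∫ ω, 2 * (Z t ω * Y t ω) ∂P :=
        integral_sub (hiYY.add hiZZ) (hiZY.const_mul 2)
      have e2 : ∫ ω, Y t ω * Y t ω + Z t ω * Z t ω ∂P
          = (∫ ω, Y t ω * Y t ω ∂P) + ∫ ω, Z t ω * Z t ω ∂P := integral_add hiYY hiZZ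
      have e3 : ∫ ω, 2 * (Z t ω * Y t ω) ∂P = 2 * ∫ ω, Z t ω * Y t ω ∂P :=
        integral_const_mul 2 _
      rw [e0, e1, e2, e3, hZY] at hnn
      linarith
    rw [hEq]
    linarith
  · -- symmetric case
    have h1 : ∫ ω, Z t ω * Z k ω ∂P = ∫ ω, Z k ω * Z t ω ∂P := by
      congr 1; funext ω; ring
    have h2 : ∫ ω, Y t ω * Y k ω ∂P = ∫ ω, Y k ω * Y t ω ∂P := by
      congr 1; funext ω; ring
    rw [h1, h2, mul_comm (∫ ω, Z t ω ∂P), mul_comm (∫ ω, Y t ω ∂P)]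
    exact hcov k t h
end

section
/- Let (Ω, 𝒜, m) be a probability space, τ : Ω → Ω an ergodic measure-preserving map, and g : Ω → ℝ integrable with c := −∫ g dm > 0. Set ρ_{1:T} := exp(∑_{k=0}^{T−1} g ∘ τ^k). Then ρ_{1:T} → 0 almost surely as T → ∞, and for any γ ∈ (0,1] and any sequence of measurable functions r_t : Ω → [0,1], the importance-weighted return ρ_{1:T} ∑_{t=1}^T γ^{t−1} r_t → 0 almost surely as T → ∞. -/
open MeasureTheory Filter Finset

namespace LRAux
variable {Ω : Type*} {mΩ : MeasurableSpace Ω}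

noncomputable def maxS (τ : Ω → Ω) (f : Ω → ℝ) : ℕ → Ω → ℝ
  | 0 => fun _ => 0
  | n + 1 => fun ω => max (maxS τ f n ω) (birkhoffSum τ f (n + 1) ω)

lemma maxS_nonneg (τ : Ω → Ω) (f : Ω → ℝ) : ∀ n ω, 0 ≤ maxS τ f n ω
  | 0, _ => le_refl 0
  | n + 1, ω => le_trans (maxS_nonneg τ f n ω) (le_max_left _ _)

lemma maxS_mono (τ : Ω → Ω) (f : Ω → ℝ) (n : ℕ) (ω : Ω) :
    maxS τ f n ω ≤ maxS τ f (n + 1) ω := le_max_left _ _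

lemma birkhoffSum_le_maxS (τ : Ω → Ω) (f : Ω → ℝ) : ∀ n ω, birkhoffSum τ f n ω ≤ maxS τ f n ω
  | 0, ω => by simp [maxS, birkhoffSum_zero]
  | n + 1, ω => le_max_right _ _

lemma maxS_key (τ : Ω → Ω) (f : Ω → ℝ) :
    ∀ n ω, maxS τ f (n + 1) ω ≤ max 0 (f ω + maxS τ f n (τ ω))
  | 0, ω => by
      simp only [maxS, birkhoffSum_one]
      exact max_le (le_max_left _ _) (by simpa using le_max_right (0:ℝ) (f ω + 0))
  | n + 1, ω => by
      refine max_le ?_ ?_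
      · exact (maxS_key τ f n ω).trans
          (max_le_max (le_refl 0) (by linarith [maxS_mono τ f n (τ ω)]))
      · have h := birkhoffSum_succ' τ f (n + 1) ω
        have h2 := birkhoffSum_le_maxS τ f (n + 1) (τ ω)
        calc birkhoffSum τ f (n + 2) ω = f ω + birkhoffSum τ f (n + 1) (τ ω) := h
          _ ≤ f ω + maxS τ f (n + 1) (τ ω) := by linarith
          _ ≤ _ := le_max_right _ _

/-- Main ergodic-theoretic input: if `∫ f < 0` and `τ` is ergodic, then a.e. the
Birkhoff sums of `f` are bounded above. -/
lemma ae_bddAbove_birkhoffSum (m : Measure Ω) [IsProbabilityMeasure m]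
    (τ : Ω → Ω) (hτ : Ergodic τ m) (f : Ω → ℝ) (hfm : Measurable f)
    (hfi : Integrable f m) (hneg : ∫ ω, f ω ∂m < 0) :
    ∀ᵐ ω ∂m, ∃ C : ℝ, ∀ n, birkhoffSum τ f n ω ≤ C := by
  have hmp : MeasurePreserving τ m m := hτ.toMeasurePreserving
  have hτm : Measurable τ := hmp.measurable
  have hSm : ∀ n, Measurable (fun ω => birkhoffSum τ f n ω) := by
    intro n
    simp only [birkhoffSum]
    exact Finset.measurable_sum _ fun k _ => hfm.comp (hτm.iterate k)
  have hSi : ∀ n, Integrable (fun ω => birkhoffSum τ f n ω) m := by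
    intro n
    simp only [birkhoffSum]
    refine integrable_finset_sum _ fun k _ => ?_
    exact ((hmp.iterate k).integrable_comp hfi.aestronglyMeasurable).mpr hfi
  have hMm : ∀ n, Measurable (maxS τ f n) := by
    intro n; induction n with
    | zero => exact measurable_const
    | succ n ih => exact ih.max (hSm (n + 1))
  have hMi : ∀ n, Integrable (maxS τ f n) m := by
    intro n; induction n with
    | zero => exact integrable_const 0
    | succ n ih => exact ih.sup (hSi (n + 1))
  have hMci : ∀ n, Integrable (fun ω => maxS τ f n (τ ω)) m :=
    fun n => (hmp.integrable_comp (hMi n).aestronglyMeasurable).mpr (hMi n)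
  set A : ℕ → Set Ω := fun j => {ω | 0 < maxS τ f j ω} with hA
  have hAmeas : ∀ j, MeasurableSet (A j) :=
    fun j => measurableSet_lt measurable_const (hMm j)
  have hAmono : ∀ j, A j ⊆ A (j + 1) :=
    fun j ω hω => lt_of_lt_of_le hω (maxS_mono τ f j ω)
  -- pointwise inequality
  have hpt : ∀ n ω, maxS τ f (n + 1) ω - maxS τ f n (τ ω) ≤ (A (n + 1)).indicator f ω := by
    intro n ω
    by_cases hω : ω ∈ A (n + 1)
    · rw [Set.indicator_of_mem hω]
      have h1 := maxS_key τ f n ω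
      have h2 : maxS τ f (n + 1) ω ≤ f ω + maxS τ f n (τ ω) := by
        rcases le_total (f ω + maxS τ f n (τ ω)) 0 with h | h
        · exfalso
          have : maxS τ f (n + 1) ω ≤ 0 := h1.trans (max_le (le_refl 0) h)
          exact absurd hω (by simpa [hA] using not_lt.mpr this)
        · exact h1.trans (max_le h (le_refl _))
      linarith
    · rw [Set.indicator_of_notMem hω]
      have h0 : maxS τ f (n + 1) ω = 0 :=
        le_antisymm (not_lt.mp hω) (maxS_nonneg τ f (n + 1) ω)
      have := maxS_nonneg τ f n (τ ω)
      linarith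
  -- integral inequality
  have hint : ∀ n, 0 ≤ ∫ ω, (A (n + 1)).indicator f ω ∂m := by
    intro n
    have e1 : ∫ ω, maxS τ f n (τ ω) ∂m = ∫ ω, maxS τ f n ω ∂m := by
      calc ∫ ω, maxS τ f n (τ ω) ∂m
          = ∫ y, maxS τ f n y ∂(Measure.map τ m) :=
            (integral_map hτm.aemeasurable
              (by rw [hmp.map_eq]; exact (hMi n).aestronglyMeasurable)).symm
        _ = ∫ ω, maxS τ f n ω ∂m := by rw [hmp.map_eq]
    have e2 : ∫ ω, (maxS τ f (n + 1) ω - maxS τ f n (τ ω)) ∂m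
        = ∫ ω, maxS τ f (n + 1) ω ∂m - ∫ ω, maxS τ f n ω ∂m := by
      rw [integral_sub (hMi (n + 1)) (hMci n), e1]
    have e3 : 0 ≤ ∫ ω, (maxS τ f (n + 1) ω - maxS τ f n (τ ω)) ∂m := by
      rw [e2]
      have := integral_mono (hMi n) (hMi (n + 1)) (fun ω => maxS_mono τ f n ω)
      linarith
    calc (0:ℝ) ≤ ∫ ω, (maxS τ f (n + 1) ω - maxS τ f n (τ ω)) ∂m := e3
      _ ≤ ∫ ω, (A (n + 1)).indicator f ω ∂m :=
          integral_mono ((hMi (n + 1)).sub (hMci n))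
            (hfi.indicator (hAmeas (n + 1))) (hpt n)
  -- pass to the union
  set Aset : Set Ω := ⋃ j, A j with hAset
  have hAsetMeas : MeasurableSet Aset := MeasurableSet.iUnion hAmeas
  have hlim : Tendsto (fun n => ∫ ω, (A (n + 1)).indicator f ω ∂m) atTop
      (nhds (∫ ω, Aset.indicator f ω ∂m)) := by
    refine tendsto_integral_of_dominated_convergence (fun ω => ‖f ω‖)
      (fun n => ((hfm.indicator (hAmeas (n + 1))).aestronglyMeasurable))
      hfi.norm (fun n => Filter.Eventually.of_forall fun ω => norm_indicator_le_norm_self f ω)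
      (Filter.Eventually.of_forall fun ω => ?_)
    by_cases hω : ω ∈ Aset
    · obtain ⟨j, hj⟩ := Set.mem_iUnion.mp hω
      have hev : ∀ n ≥ j, (A (n + 1)).indicator f ω = Aset.indicator f ω := by
        intro n hn
        have hmem : ω ∈ A (n + 1) := by
          have : maxS τ f j ω ≤ maxS τ f (n + 1) ω := by
            have : ∀ k, maxS τ f j ω ≤ maxS τ f (j + k) ω := by
              intro k; induction k with
              | zero => exact le_refl _
              | succ k ih => exact ih.trans (maxS_mono τ f (j + k) ω)
            have h' := this (n + 1 - j)
            rwa [Nat.add_sub_cancel' (hn.trans (Nat.le_succ n))] at h'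
          exact lt_of_lt_of_le hj this
        rw [Set.indicator_of_mem hmem, Set.indicator_of_mem hω]
      exact tendsto_const_nhds.congr' (eventually_atTop.mpr ⟨j, fun n hn => (hev n hn).symm⟩)
    · have : ∀ n, (A (n + 1)).indicator f ω = Aset.indicator f ω := by
        intro n
        rw [Set.indicator_of_notMem hω, Set.indicator_of_notMem
          (fun h => hω (Set.mem_iUnion.mpr ⟨n + 1, h⟩))]
      exact tendsto_const_nhds.congr fun n => (this n).symm
  have hA0 : 0 ≤ ∫ ω, Aset.indicator f ω ∂m := ge_of_tendsto' hlim hint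
  -- the unboundedness set
  set B : Set Ω := {ω | ∀ C : ℝ, ∃ n, C < birkhoffSum τ f n ω} with hB
  have hBeq : B = ⋂ (k : ℕ), ⋃ n, {ω | (k : ℝ) < birkhoffSum τ f n ω} := by
    ext ω
    simp only [hB, Set.mem_setOf_eq, Set.mem_iInter, Set.mem_iUnion]
    constructor
    · intro h k; exact h k
    · intro h C
      obtain ⟨k, hk⟩ := exists_nat_gt C
      obtain ⟨n, hn⟩ := h k
      exact ⟨n, hk.trans hn⟩
  have hBmeas : MeasurableSet B := by
    rw [hBeq]
    exact MeasurableSet.iInter fun k => MeasurableSet.iUnion fun n =>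
      measurableSet_lt measurable_const (hSm n)
  have hBinv : τ ⁻¹' B = B := by
    ext ω
    simp only [Set.mem_preimage, hB, Set.mem_setOf_eq]
    constructor
    · intro h C
      obtain ⟨n, hn⟩ := h (C - f ω)
      refine ⟨n + 1, ?_⟩
      have := birkhoffSum_succ' τ f n ω
      rw [this]; linarith
    · intro h C
      obtain ⟨n, hn⟩ := h (max (C + f ω) 0)
      match n with
      | 0 =>
        exfalso
        rw [birkhoffSum_zero] at hn
        exact absurd hn (not_lt.mpr (le_max_right _ _))
      | k + 1 =>
        refine ⟨k, ?_⟩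
        have h1 := birkhoffSum_succ' τ f k ω
        have h2 : C + f ω ≤ max (C + f ω) 0 := le_max_left _ _
        rw [h1] at hn
        linarith
  rcases hτ.ae_empty_or_univ hBmeas hBinv with hcase | hcase
  · -- B is null, done
    have hB0 : m B = 0 := by
      have := hcase
      rwa [MeasureTheory.ae_eq_empty] at this
    have hnm : ∀ᵐ ω ∂m, ω ∉ B := measure_eq_zero_iff_ae_notMem.mp hB0
    filter_upwards [hnm] with ω hω
    simp only [hB, Set.mem_setOf_eq, not_forall, not_exists, not_lt] at hω
    exact hω
  · -- B is conull: contradiction with ∫ f < 0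
    exfalso
    have hae : ∀ᵐ ω ∂m, ω ∈ B := by
      rw [MeasureTheory.ae_eq_univ] at hcase
      exact measure_eq_zero_iff_ae_notMem.mp hcase |>.mono fun ω h => not_not.mp h
    have hBA : B ⊆ Aset := by
      intro ω hω
      obtain ⟨n, hn⟩ := hω 0
      exact Set.mem_iUnion.mpr ⟨n, lt_of_lt_of_le hn (birkhoffSum_le_maxS τ f n ω)⟩
    have heq : Aset.indicator f =ᵐ[m] f :=
      hae.mono fun ω hω => Set.indicator_of_mem (hBA hω) f
    rw [integral_congr_ae heq] at hA0
    linarith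

end LRAux


/-- For an ergodic measure-preserving `τ`, integrable `g` with
`c := −∫ g dm > 0`, and `ρ_{1:T} := exp(∑_{k<T} g ∘ τᵏ)`, we have `ρ_{1:T} → 0` a.s.,
and for any `γ ∈ (0,1]` and measurable `r_t : Ω → [0,1]`, the importance-weighted
return `ρ_{1:T} ∑_{t=1}^T γ^{t−1} r_t → 0` a.s. as `T → ∞`. -/
theorem likelihood_ratio_tendsto_zero
    {Ω : Type*} {mΩ : MeasurableSpace Ω} (m : Measure Ω) [IsProbabilityMeasure m]
    (τ : Ω → Ω) (hτ : Ergodic τ m)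
    (g : Ω → ℝ) (hg : Integrable g m)
    (c : ℝ) (hc : c = -∫ ω, g ω ∂m) (hc_pos : 0 < c)
    (ρ : ℕ → Ω → ℝ)
    (hρ : ∀ T ω, ρ T ω = Real.exp (∑ k ∈ Finset.range T, g (τ^[k] ω))) :
    (∀ᵐ ω ∂m, Tendsto (fun T : ℕ => ρ T ω) atTop (nhds 0)) ∧
    ∀ (γ : ℝ), γ ∈ Set.Ioc (0 : ℝ) 1 →
      ∀ (r : ℕ → Ω → ℝ), (∀ t, Measurable (r t)) → (∀ t ω, r t ω ∈ Set.Icc (0 : ℝ) 1) →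
      ∀ᵐ ω ∂m,
        Tendsto (fun T : ℕ => ρ T ω * ∑ t ∈ Icc 1 T, γ ^ (t - 1) * r t ω)
          atTop (nhds 0) := by
  -- derive the key boundedness statement from the maximal-ergodic lemma
  have hkey : ∀ᵐ ω ∂m, ∃ C : ℝ, ∀ n,
      birkhoffSum τ (fun ω => hg.1.mk g ω + c / 2) n ω ≤ C := by
    have hgg' : g =ᵐ[m] hg.1.mk g := hg.1.ae_eq_mk
    have hfm : Measurable (fun ω => hg.1.mk g ω + c / 2) :=
      hg.1.stronglyMeasurable_mk.measurable.add_const _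
    have hfi : Integrable (fun ω => hg.1.mk g ω + c / 2) m :=
      (hg.congr hgg').add (integrable_const _)
    have hneg : ∫ ω, (hg.1.mk g ω + c / 2) ∂m < 0 := by
      rw [integral_add (hg.congr hgg') (integrable_const _),
        integral_congr_ae hgg'.symm]
      simp only [integral_const, measure_univ, ENNReal.toReal_one, probReal_univ, smul_eq_mul, one_mul]
      linarith [hc ▸ hc_pos]
    exact LRAux.ae_bddAbove_birkhoffSum m τ hτ _ hfm hfi hneg

  have hmp : MeasurePreserving τ m m := hτ.toMeasurePreserving
  set g' : Ω → ℝ := hg.1.mk g with hg'def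
  have hgg' : g =ᵐ[m] g' := hg.1.ae_eq_mk
  -- transfer a.e. equality along iterates
  have htrans : ∀ᵐ ω ∂m, ∀ k, g (τ^[k] ω) = g' (τ^[k] ω) := by
    rw [ae_all_iff]
    intro k
    exact ae_eq_comp (hmp.iterate k).measurable.aemeasurable (by rwa [(hmp.iterate k).map_eq])
  -- Birkhoff sum of f splits
  have hsplit : ∀ (n : ℕ) (ω : Ω),
      birkhoffSum τ (fun ω => g' ω + c/2) n ω
        = (∑ k ∈ Finset.range n, g' (τ^[k] ω)) + n * (c/2) := by
    intro n ω
    simp [birkhoffSum, Finset.sum_add_distrib, mul_comm]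
  -- main a.e. bound on the sums of g itself
  have hmain : ∀ᵐ ω ∂m, ∃ C : ℝ, ∀ T : ℕ,
      (∑ k ∈ Finset.range T, g (τ^[k] ω)) ≤ C - T * (c/2) := by
    filter_upwards [hkey, htrans] with ω ⟨C, hC⟩ hω
    refine ⟨C, fun T => ?_⟩
    have h1 : (∑ k ∈ Finset.range T, g (τ^[k] ω)) = ∑ k ∈ Finset.range T, g' (τ^[k] ω) :=
      Finset.sum_congr rfl fun k _ => hω k
    have h2 := hC T
    rw [hsplit T ω] at h2
    linarith [h1 ▸ h2]
  constructor
  · filter_upwards [hmain] with ω hω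
    obtain ⟨C, hC⟩ := hω
    have hub : Tendsto (fun T : ℕ => Real.exp (C - T * (c/2))) atTop (nhds 0) := by
      refine Real.tendsto_exp_atBot.comp ?_
      have h1 : Tendsto (fun T : ℕ => (T : ℝ) * (c/2)) atTop atTop :=
        Tendsto.atTop_mul_const (by linarith) tendsto_natCast_atTop_atTop
      have h2 : Tendsto (fun T : ℕ => -((T : ℝ) * (c/2))) atTop atBot :=
        tendsto_neg_atTop_atBot.comp h1
      have := tendsto_atBot_add_const_left atTop C h2
      exact this.congr fun T => by ring
    refine tendsto_of_tendsto_of_tendsto_of_le_of_le tendsto_const_nhds hub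
      (fun T => by rw [hρ]; exact (Real.exp_pos _).le) (fun T => ?_)
    rw [hρ]
    exact Real.exp_le_exp.mpr (hC T)
  · intro γ hγ r _ hr01
    filter_upwards [hmain] with ω hω
    obtain ⟨C, hC⟩ := hω
    have hρnn : ∀ T, 0 ≤ ρ T ω := fun T => by rw [hρ]; exact (Real.exp_pos _).le
    have hsumnn : ∀ T : ℕ, 0 ≤ ∑ t ∈ Icc 1 T, γ ^ (t - 1) * r t ω := by
      intro T
      refine Finset.sum_nonneg fun t _ => mul_nonneg (pow_nonneg hγ.1.le _) (hr01 t ω).1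
    have hsumle : ∀ T : ℕ, (∑ t ∈ Icc 1 T, γ ^ (t - 1) * r t ω) ≤ T := by
      intro T
      calc (∑ t ∈ Icc 1 T, γ ^ (t - 1) * r t ω) ≤ ∑ t ∈ Icc 1 T, 1 := by
            refine Finset.sum_le_sum fun t _ => ?_
            exact mul_le_one₀ (pow_le_one₀ hγ.1.le hγ.2) (hr01 t ω).1 (hr01 t ω).2
        _ = (T : ℝ) := by simp [Nat.card_Icc]
    -- upper bound sequence
    have hub : Tendsto (fun T : ℕ => Real.exp (C - T * (c/2)) * T) atTop (nhds 0) := by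
      have hre : Tendsto (fun x : ℝ => Real.exp C * (2/c) * (x * Real.exp (-x)))
          atTop (nhds 0) := by
        have := Real.tendsto_pow_mul_exp_neg_atTop_nhds_zero 1
        simpa using (this.const_mul (Real.exp C * (2/c)))
      have hcomp : Tendsto (fun T : ℕ => (T : ℝ) * (c/2)) atTop atTop :=
        Tendsto.atTop_mul_const (by linarith) tendsto_natCast_atTop_atTop
      have := hre.comp hcomp
      refine this.congr fun T => ?_
      simp only [Function.comp_apply]
      rw [Real.exp_sub, Real.exp_neg]
      field_simp
    refine tendsto_of_tendsto_of_tendsto_of_le_of_le tendsto_const_nhds hub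
      (fun T => mul_nonneg (hρnn T) (hsumnn T)) (fun T => ?_)
    have h1 : ρ T ω ≤ Real.exp (C - T * (c/2)) := by
      rw [hρ]; exact Real.exp_le_exp.mpr (hC T)
    calc ρ T ω * ∑ t ∈ Icc 1 T, γ ^ (t - 1) * r t ω
        ≤ ρ T ω * T := mul_le_mul_of_nonneg_left (hsumle T) (hρnn T)
      _ ≤ Real.exp (C - T * (c/2)) * T :=
          mul_le_mul_of_nonneg_right h1 (Nat.cast_nonneg T)
end

section
/- In the likelihood-ratio filtration setup, let Y := ρ_{1:T} ∑_{t=1}^T γ^{t−1} r_t with v := E[Y] > 0 and Y square-integrable. Suppose there exist constants c > 0, d > 0, F ≥ 0, a martingale (M_t)_{t=0}^T adapted to (ℱ_t) with M_0 = 0 and |M_t − M_{t−1}| ≤ d almost surely, and a random variable D with |D| ≤ 2F almost surely, such that log ρ_{1:T} = −Tc + D + M_T. If T satisfies Tc/2 ≥ 2F + log(2T) − log v, then Var(Y) ≥ (v²/4) exp( T c² / (8 d²) ) − v²; in particular the variance of the crude importance-sampling estimator grows at least exponentially in the horizon T. -/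
open MeasureTheory Finset

lemma hoeffding_pointwise {l d x : ℝ} (hd : 0 < d) (hx : |x| ≤ d) :
    Real.exp (l * x) ≤ Real.cosh (l * d) + (x / d) * Real.sinh (l * d) := by
  obtain ⟨hx1, hx2⟩ := abs_le.mp hx
  have hd0 : d ≠ 0 := hd.ne'
  have hd2 : (2 : ℝ) * d ≠ 0 := by positivity
  have ha : (0:ℝ) ≤ (d - x) / (2 * d) := div_nonneg (by linarith) (by linarith)
  have hb : (0:ℝ) ≤ (d + x) / (2 * d) := div_nonneg (by linarith) (by linarith)
  have hab : (d - x) / (2 * d) + (d + x) / (2 * d) = 1 := by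
    rw [← add_div, div_eq_one_iff_eq hd2]; ring
  have key := convexOn_exp.2 (Set.mem_univ (-(l * d))) (Set.mem_univ (l * d)) ha hb hab
  have h1 : ((d - x) / (2 * d)) • (-(l * d)) + ((d + x) / (2 * d)) • (l * d) = l * x := by
    rw [smul_eq_mul, smul_eq_mul,
      show (d - x) / (2 * d) * -(l * d) + (d + x) / (2 * d) * (l * d)
        = ((d - x) * -(l * d) + (d + x) * (l * d)) / (2 * d) by ring,
      div_eq_iff hd2]
    ring
  rw [h1] at key
  refine key.trans (le_of_eq ?_)
  rw [Real.cosh_eq, Real.sinh_eq, smul_eq_mul, smul_eq_mul]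
  field_simp
  ring

lemma azuma_mgf {Ω : Type*} {m0 : MeasurableSpace Ω} (P : Measure Ω) [IsProbabilityMeasure P]
    (ℱ : MeasureTheory.Filtration ℕ m0) (M : ℕ → Ω → ℝ) (hM : Martingale M ℱ P)
    (hM0 : ∀ ω, M 0 ω = 0) (T : ℕ) (d : ℝ) (hd : 0 < d)
    (hbdd : ∀ t, 1 ≤ t → t ≤ T → ∀ᵐ ω ∂P, |M t ω - M (t - 1) ω| ≤ d)
    (l : ℝ) (hl : 0 ≤ l) :
    Integrable (fun ω => Real.exp (l * M T ω)) P ∧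
      ∫ ω, Real.exp (l * M T ω) ∂P ≤ Real.cosh (l * d) ^ T := by
  -- strongly measurable
  have stM : ∀ n, StronglyMeasurable (M n) := fun n => (hM.stronglyAdapted n).mono (ℱ.le n)
  -- a.e. bound |M n| ≤ n * d for n ≤ T
  have hMb : ∀ n, n ≤ T → ∀ᵐ ω ∂P, |M n ω| ≤ n * d := by
    intro n
    induction n with
    | zero => intro _; filter_upwards with ω; simp [hM0 ω]
    | succ k ih =>
      intro hk
      have h1 := ih (le_trans (Nat.le_succ k) hk)
      have h2 := hbdd (k + 1) (Nat.le_add_left 1 k) hk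
      filter_upwards [h1, h2] with ω h1 h2
      have : |M (k+1) ω| ≤ |M k ω| + |M (k+1) ω - M k ω| := by
        have := abs_add_le (M k ω) (M (k+1) ω - M k ω); simpa using this
      simp only [Nat.add_sub_cancel] at h2
      push_cast
      nlinarith
  -- integrability of exp(l * M n)
  have int_exp : ∀ n, n ≤ T → Integrable (fun ω => Real.exp (l * M n ω)) P := by
    intro n hn
    refine ⟨(Real.continuous_exp.comp (continuous_const.mul continuous_id)).comp_stronglyMeasurable
      (stM n) |>.aestronglyMeasurable, HasFiniteIntegral.of_bounded (C := Real.exp (l * (n * d))) ?_⟩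
    filter_upwards [hMb n hn] with ω hω
    rw [Real.norm_eq_abs, abs_of_pos (Real.exp_pos _)]
    exact Real.exp_le_exp.mpr (by nlinarith [abs_le.mp hω])
  -- main induction
  have main : ∀ n, n ≤ T → ∫ ω, Real.exp (l * M n ω) ∂P ≤ Real.cosh (l * d) ^ n := by
    intro n
    induction n with
    | zero => intro _; simp [hM0]
    | succ k ih =>
      intro hk
      have hkT := le_trans (Nat.le_succ k) hk
      set g : Ω → ℝ := fun ω => Real.exp (l * M k ω) with hg
      set Δ : Ω → ℝ := fun ω => M (k+1) ω - M k ω with hΔ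
      have hbd := hbdd (k+1) (Nat.le_add_left 1 k) hk
      simp only [Nat.add_sub_cancel] at hbd
      -- integrability facts
      have intΔ : Integrable Δ P := (hM.integrable (k+1)).sub (hM.integrable k)
      have intg : Integrable g P := int_exp k hkT
      have intgΔ : Integrable (g * Δ) P := by
        refine ⟨(intg.1.mul intΔ.1), HasFiniteIntegral.of_bounded
          (C := Real.exp (l * (k * d)) * d) ?_⟩
        filter_upwards [hMb k hkT, hbd] with ω h1 h2
        rw [Pi.mul_apply, norm_mul, Real.norm_eq_abs, Real.norm_eq_abs,
          abs_of_pos (Real.exp_pos _)]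
        have : Real.exp (l * M k ω) ≤ Real.exp (l * (k * d)) :=
          Real.exp_le_exp.mpr (by nlinarith [abs_le.mp h1])
        exact mul_le_mul this h2 (abs_nonneg _) (Real.exp_nonneg _)
      -- conditional expectation of Δ is 0
      haveI : SigmaFinite (P.trim (ℱ.le k)) := by
        exact @IsFiniteMeasure.toSigmaFinite _ _ _ (isFiniteMeasure_trim _)
      have hcondΔ : P[Δ | ℱ k] =ᵐ[P] 0 := by
        have h1 : P[fun ω => M (k+1) ω - M k ω | ℱ k] =ᵐ[P]
            P[M (k+1) | ℱ k] - P[M k | ℱ k] := condExp_sub (hM.integrable (k+1)) (hM.integrable k) _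
        have h2 := hM.condExp_ae_eq (Nat.le_succ k)
        have h3 : P[M k | ℱ k] = M k :=
          condExp_of_stronglyMeasurable (ℱ.le k) (hM.stronglyAdapted k) (hM.integrable k)
        filter_upwards [h1, h2] with ω h1 h2
        simp only [hΔ]
        rw [h1, Pi.sub_apply, h2, h3, Pi.zero_apply, sub_self]
      -- orthogonality
      have hzero : ∫ ω, g ω * Δ ω ∂P = 0 := by
        have hgm : StronglyMeasurable[ℱ k] g :=
          (Real.continuous_exp.comp (continuous_const.mul continuous_id)).comp_stronglyMeasurable
            (hM.stronglyAdapted k)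
        have hmul := condExp_mul_of_stronglyMeasurable_left hgm intgΔ intΔ
        have : ∫ ω, (g * Δ) ω ∂P = ∫ ω, (P[g * Δ | ℱ k]) ω ∂P :=
          (integral_condExp (ℱ.le k)).symm
        rw [show (∫ ω, g ω * Δ ω ∂P) = ∫ ω, (g * Δ) ω ∂P from rfl, this]
        have heq : P[g * Δ | ℱ k] =ᵐ[P] 0 := by
          filter_upwards [hmul, hcondΔ] with ω h1 h2
          simp only [Pi.zero_apply] at h2 ⊢
          rw [h1, Pi.mul_apply, h2, mul_zero]
        rw [integral_congr_ae heq]; simp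
      -- pointwise bound
      have hpt : ∀ᵐ ω ∂P, Real.exp (l * M (k+1) ω) ≤
          Real.cosh (l * d) * g ω + Real.sinh (l * d) / d * (g ω * Δ ω) := by
        filter_upwards [hbd] with ω hω
        have h1 : Real.exp (l * M (k+1) ω) = g ω * Real.exp (l * Δ ω) := by
          rw [← Real.exp_add]; congr 1; simp only [hΔ]; ring
        have h2 := hoeffding_pointwise (l := l) hd hω
        calc Real.exp (l * M (k+1) ω) = g ω * Real.exp (l * Δ ω) := h1
          _ ≤ g ω * (Real.cosh (l * d) + Δ ω / d * Real.sinh (l * d)) :=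
            mul_le_mul_of_nonneg_left h2 (Real.exp_nonneg _)
          _ = Real.cosh (l * d) * g ω + Real.sinh (l * d) / d * (g ω * Δ ω) := by ring
      -- integrate
      have intRHS : Integrable (fun ω => Real.cosh (l * d) * g ω
          + Real.sinh (l * d) / d * (g ω * Δ ω)) P :=
        (intg.const_mul _).add (intgΔ.const_mul _)
      have step : ∫ ω, Real.exp (l * M (k+1) ω) ∂P ≤ Real.cosh (l * d) * ∫ ω, g ω ∂P := by
        calc ∫ ω, Real.exp (l * M (k+1) ω) ∂P
            ≤ ∫ ω, (Real.cosh (l * d) * g ω + Real.sinh (l * d) / d * (g ω * Δ ω)) ∂P :=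
              integral_mono_ae (int_exp (k+1) hk) intRHS hpt
          _ = Real.cosh (l * d) * ∫ ω, g ω ∂P + Real.sinh (l * d) / d * ∫ ω, g ω * Δ ω ∂P := by
              have intgΔ' : Integrable (fun ω => g ω * Δ ω) P := intgΔ
              rw [integral_add (intg.const_mul _) (intgΔ'.const_mul _),
                integral_const_mul, integral_const_mul]
          _ = Real.cosh (l * d) * ∫ ω, g ω ∂P := by rw [hzero, mul_zero, add_zero]
      calc ∫ ω, Real.exp (l * M (k+1) ω) ∂P ≤ Real.cosh (l * d) * ∫ ω, g ω ∂P := step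
        _ ≤ Real.cosh (l * d) * Real.cosh (l * d) ^ k :=
            mul_le_mul_of_nonneg_left (ih hkT) (Real.cosh_pos (x := l * d)).le
        _ = Real.cosh (l * d) ^ (k + 1) := by ring
  exact ⟨int_exp T le_rfl, main T le_rfl⟩

/-- In the likelihood-ratio filtration setup, let
`Y := ρ_{1:T} ∑_t γ^{t−1} r_t` with `v := E[Y] > 0` and `Y` square-integrable. If
`log ρ_{1:T} = −Tc + D + M_T` for a martingale `M` with `M_0 = 0` and increments
bounded by `d`, and `|D| ≤ 2F` a.s., and `Tc/2 ≥ 2F + log(2T) − log v`, then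
`Var(Y) ≥ (v²/4) exp(Tc²/(8d²)) − v²`, with `Var(X) := E[X²] − (E[X])²`. -/
theorem is_variance_exponential_lower_bound
    {Ω : Type*} {m0 : MeasurableSpace Ω} (P : Measure Ω) [IsProbabilityMeasure P]
    (T : ℕ) (ℱ : MeasureTheory.Filtration ℕ m0)
    (γ : ℝ) (hγ : γ ∈ Set.Ioc (0 : ℝ) 1)
    (ρ : ℕ → Ω → ℝ)
    (hρ_meas : ∀ t, 1 ≤ t → t ≤ T → Measurable[ℱ t] (ρ t))
    (hρ_nonneg : ∀ t ω, 0 ≤ ρ t ω)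
    (hρ_int : ∀ t, 1 ≤ t → t ≤ T → Integrable (ρ t) P)
    (hρ_cond : ∀ t, 1 ≤ t → t ≤ T → P[ρ t | ℱ (t - 1)] =ᵐ[P] fun _ => (1 : ℝ))
    (ρprod : ℕ → Ω → ℝ)
    (hρprod : ∀ t ω, ρprod t ω = ∏ k ∈ Icc 1 t, ρ k ω)
    (r : ℕ → Ω → ℝ)
    (hr_meas : ∀ t, 1 ≤ t → t ≤ T → Measurable[ℱ t] (r t))
    (hr_range : ∀ t ω, r t ω ∈ Set.Icc (0 : ℝ) 1)
    (hρprod_sq : ∀ t, 1 ≤ t → t ≤ T → MemLp (ρprod t) 2 P)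
    (Y : Ω → ℝ)
    (hY : ∀ ω, Y ω = ρprod T ω * ∑ t ∈ Icc 1 T, γ ^ (t - 1) * r t ω)
    (hY_sq : MemLp Y 2 P)
    (v : ℝ) (hv : v = ∫ ω, Y ω ∂P) (hv_pos : 0 < v)
    (c d F : ℝ) (hc_pos : 0 < c) (hd_pos : 0 < d) (hF_nonneg : 0 ≤ F)
    (M : ℕ → Ω → ℝ) (hM : Martingale M ℱ P) (hM0 : ∀ ω, M 0 ω = 0)
    (hM_bdd : ∀ t, 1 ≤ t → t ≤ T → ∀ᵐ ω ∂P, |M t ω - M (t - 1) ω| ≤ d)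
    (D : Ω → ℝ) (hD_bdd : ∀ᵐ ω ∂P, |D ω| ≤ 2 * F)
    (h_decomp : ∀ᵐ ω ∂P, Real.log (ρprod T ω) = -(T : ℝ) * c + D ω + M T ω)
    (hT : (T : ℝ) * c / 2 ≥ 2 * F + Real.log (2 * T) - Real.log v) :
    (∫ ω, (Y ω) ^ 2 ∂P) - v ^ 2
      ≥ v ^ 2 / 4 * Real.exp ((T : ℝ) * c ^ 2 / (8 * d ^ 2)) - v ^ 2 := by

  classical
  -- T ≥ 1
  have hT1 : 1 ≤ T := by
    by_contra h
    push_neg at h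
    obtain rfl : T = 0 := by omega
    have h0 : ∀ ω, Y ω = 0 := by
      intro ω; rw [hY ω]; simp
    rw [hv] at hv_pos
    simp only [h0, integral_zero] at hv_pos
    exact lt_irrefl _ hv_pos
  have hTpos : (0:ℝ) < T := by exact_mod_cast hT1
  -- nonnegativity of Y
  have hYnn : ∀ ω, 0 ≤ Y ω := by
    intro ω
    rw [hY ω]
    refine mul_nonneg ?_ (Finset.sum_nonneg fun t _ =>
      mul_nonneg (pow_nonneg hγ.1.le _) (hr_range t ω).1)
    rw [hρprod]
    exact Finset.prod_nonneg fun k _ => hρ_nonneg k ω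
  -- the bad set
  set S : Set Ω := {ω | (T:ℝ) * c / 2 ≤ M T ω} with hSdef
  have hSmeas : MeasurableSet S :=
    measurableSet_le measurable_const ((hM.stronglyAdapted T).mono (ℱ.le T)).measurable
  set ind : Ω → ℝ := S.indicator (fun _ => (1:ℝ)) with hind
  -- Step A : pointwise bound Y ≤ v/2 + Y * ind a.e.
  have hptA : ∀ᵐ ω ∂P, Y ω ≤ v / 2 + Y ω * ind ω := by
    filter_upwards [hD_bdd, h_decomp] with ω hD hdec
    by_cases hω : ω ∈ S
    · rw [hind, Set.indicator_of_mem hω, mul_one]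
      linarith
    · rw [hind, Set.indicator_of_notMem hω, mul_zero, add_zero]
      have hMlt : M T ω < (T:ℝ) * c / 2 := not_le.mp hω
      -- sum bounds
      have hsum_nn : 0 ≤ ∑ t ∈ Icc 1 T, γ ^ (t - 1) * r t ω :=
        Finset.sum_nonneg fun t _ => mul_nonneg (pow_nonneg hγ.1.le _) (hr_range t ω).1
      have hsum_le : ∑ t ∈ Icc 1 T, γ ^ (t - 1) * r t ω ≤ (T : ℝ) := by
        calc ∑ t ∈ Icc 1 T, γ ^ (t - 1) * r t ω ≤ ∑ t ∈ Icc 1 T, (1:ℝ) := by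
              refine Finset.sum_le_sum fun t _ => ?_
              have h1 : γ ^ (t - 1) ≤ 1 := pow_le_one₀ hγ.1.le hγ.2
              have h2 := hr_range t ω
              have h3 : (0:ℝ) ≤ γ ^ (t-1) := pow_nonneg hγ.1.le _
              nlinarith [h2.1, h2.2]
          _ = (T : ℝ) := by simp [Nat.card_Icc]
      have hρnn : 0 ≤ ρprod T ω := by
        rw [hρprod]; exact Finset.prod_nonneg fun k _ => hρ_nonneg k ω
      rcases eq_or_lt_of_le hρnn with h0 | hpos
      · rw [hY ω, ← h0, zero_mul]; linarith
      · have hlog : Real.log (ρprod T ω) ≤ 2 * F - (T:ℝ) * c / 2 := by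
          rw [hdec]
          have := (abs_le.mp hD).2
          linarith
        have h2T : (0:ℝ) < 2 * T := by linarith
        have hρle : ρprod T ω ≤ v / (2 * T) := by
          rw [← Real.exp_log hpos]
          calc Real.exp (Real.log (ρprod T ω)) ≤ Real.exp (Real.log v - Real.log (2 * T)) := by
                refine Real.exp_le_exp.mpr ?_
                have : 2 * F - (T:ℝ) * c / 2 ≤ Real.log v - Real.log (2 * T) := by linarith
                linarith
            _ = v / (2 * T) := by
                rw [Real.exp_sub, Real.exp_log hv_pos, Real.exp_log h2T]
        rw [hY ω]
        calc ρprod T ω * ∑ t ∈ Icc 1 T, γ ^ (t - 1) * r t ω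
            ≤ (v / (2 * T)) * (T : ℝ) :=
              mul_le_mul hρle hsum_le hsum_nn (le_of_lt (by positivity))
          _ = v / 2 := by field_simp
  -- integrability
  have hYint : Integrable Y P := hY_sq.integrable one_le_two
  have hindInt : Integrable (fun ω => Y ω * ind ω) P := by
    have heq : (fun ω => Y ω * ind ω) = S.indicator Y := by
      funext ω; by_cases h : ω ∈ S <;>
        simp [hind, Set.indicator_of_mem, Set.indicator_of_notMem, h]
    rw [heq]
    exact hYint.indicator hSmeas
  -- Step A integrated
  have hA : v / 2 ≤ ∫ ω, Y ω * ind ω ∂P := by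
    have h1 : ∫ ω, Y ω ∂P ≤ ∫ ω, (v / 2 + Y ω * ind ω) ∂P :=
      integral_mono_ae hYint ((integrable_const _).add hindInt) hptA
    rw [integral_add (integrable_const _) hindInt, integral_const] at h1
    simp only [probReal_univ, smul_eq_mul, one_mul] at h1
    rw [← hv] at h1
    linarith
  -- Step B : Cauchy-Schwarz
  have hconj : Real.HolderConjugate 2 2 := Real.holderConjugate_iff.mpr ⟨one_lt_two, by norm_num⟩
  have hofReal : (ENNReal.ofReal (2:ℝ)) = 2 := by
    rw [ENNReal.ofReal_ofNat]
  have hY2 : MemLp Y (ENNReal.ofReal (2:ℝ)) P := by rw [hofReal]; exact hY_sq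
  have hind2 : MemLp ind (ENNReal.ofReal (2:ℝ)) P := by
    rw [hofReal, hind]
    exact memLp_indicator_const 2 hSmeas 1 (Or.inr (measure_ne_top P S))
  have hB := integral_mul_le_Lp_mul_Lq_of_nonneg (μ := P) hconj
    (Filter.Eventually.of_forall hYnn)
    (Filter.Eventually.of_forall fun ω => Set.indicator_nonneg (fun _ _ => zero_le_one) ω)
    hY2 hind2
  -- identify the two integrals
  have hYrpow : ∫ ω, Y ω ^ (2:ℝ) ∂P = ∫ ω, Y ω ^ 2 ∂P := by
    refine integral_congr_ae (Filter.Eventually.of_forall fun ω => ?_)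
    exact Real.rpow_two _
  have hindrpow : ∫ ω, ind ω ^ (2:ℝ) ∂P = (P S).toReal := by
    have heq : (fun ω => ind ω ^ (2:ℝ)) = ind := by
      funext ω; by_cases h : ω ∈ S <;>
        simp [hind, Set.indicator_of_mem, Set.indicator_of_notMem, h,
          Real.rpow_two]
    rw [heq, hind, integral_indicator_const (1:ℝ) hSmeas]
    simp; rfl
  rw [hYrpow, hindrpow] at hB
  set E2 : ℝ := ∫ ω, Y ω ^ 2 ∂P with hE2def
  set p : ℝ := (P S).toReal with hpdef
  have hE2nn : 0 ≤ E2 := integral_nonneg fun ω => sq_nonneg _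
  have hpnn : 0 ≤ p := ENNReal.toReal_nonneg
  have hsq : v ^ 2 / 4 ≤ E2 * p := by
    have hvs : v / 2 ≤ Real.sqrt (E2 * p) := by
      have : E2 ^ ((1:ℝ)/2) * p ^ ((1:ℝ)/2) = Real.sqrt (E2 * p) := by
        rw [Real.sqrt_eq_rpow, Real.mul_rpow hE2nn hpnn]
      calc v / 2 ≤ ∫ ω, Y ω * ind ω ∂P := hA
        _ ≤ E2 ^ ((1:ℝ)/2) * p ^ ((1:ℝ)/2) := hB
        _ = Real.sqrt (E2 * p) := this
    have h1 : (v/2)^2 ≤ Real.sqrt (E2 * p) ^ 2 :=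
      pow_le_pow_left₀ (by linarith) hvs 2
    rw [Real.sq_sqrt (mul_nonneg hE2nn hpnn)] at h1
    calc v ^ 2 / 4 = (v/2)^2 := by ring
      _ ≤ E2 * p := h1
  -- Step C : Azuma + Chernoff
  set l : ℝ := c / (2 * d ^ 2) with hldef
  have hl : 0 < l := by positivity
  obtain ⟨hint, hmgf⟩ := azuma_mgf P ℱ M hM hM0 T d hd_pos hM_bdd l hl.le
  set X : ℝ := (T:ℝ) * c ^ 2 / (8 * d ^ 2) with hXdef
  have hp_le : p ≤ Real.exp (-X) := by
    have hch := ProbabilityTheory.measure_ge_le_exp_mul_mgf (μ := P) (X := M T)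
      ((T:ℝ) * c / 2) hl.le hint
    have hmgf' : ProbabilityTheory.mgf (M T) P l ≤ Real.cosh (l * d) ^ T := hmgf
    have hcosh : Real.cosh (l * d) ^ T ≤ Real.exp ((l * d) ^ 2 / 2) ^ T :=
      pow_le_pow_left₀ (Real.cosh_pos (x := l * d)).le (Real.cosh_le_exp_half_sq _) T
    have harith : Real.exp (-l * ((T:ℝ) * c / 2)) * Real.exp ((l * d) ^ 2 / 2) ^ T
        = Real.exp (-X) := by
      rw [← Real.exp_nat_mul, ← Real.exp_add]
      congr 1
      rw [hldef, hXdef]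
      field_simp
      ring
    calc p ≤ Real.exp (-l * ((T:ℝ) * c / 2)) * ProbabilityTheory.mgf (M T) P l := hch
      _ ≤ Real.exp (-l * ((T:ℝ) * c / 2)) * Real.exp ((l * d) ^ 2 / 2) ^ T := by
          refine mul_le_mul_of_nonneg_left (hmgf'.trans hcosh) (Real.exp_nonneg _)
      _ = Real.exp (-X) := harith
  -- conclusion
  have hfinal : v ^ 2 / 4 * Real.exp X ≤ E2 := by
    have hbound : v ^ 2 / 4 ≤ E2 * Real.exp (-X) := by
      calc v ^ 2 / 4 ≤ E2 * p := hsq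
        _ ≤ E2 * Real.exp (-X) := mul_le_mul_of_nonneg_left hp_le hE2nn
    have hex : Real.exp (-X) * Real.exp X = 1 := by
      rw [← Real.exp_add, neg_add_cancel, Real.exp_zero]
    calc v ^ 2 / 4 * Real.exp X ≤ E2 * Real.exp (-X) * Real.exp X :=
          mul_le_mul_of_nonneg_right hbound (Real.exp_nonneg _)
      _ = E2 := by rw [mul_assoc, hex, mul_one]
  exact sub_le_sub_right hfinal _
end

section
/- In the likelihood-ratio filtration setup, suppose there exist constants c > 0, d > 0, F ≥ 0, a martingale (M_t)_{t=0}^T adapted to (ℱ_t) with M_0 = 0 and |M_t − M_{t−1}| ≤ d almost surely, and random variables D_t with |D_t| ≤ 2F almost surely, such that log ρ_{1:t} = −tc + D_t + M_t for every 1 ≤ t ≤ T. For each t set m_t := E[ρ_{1:t} r_t] and assume each ρ_{1:t} r_t is square-integrable, and let v^π := E[ ∑_{t=1}^T γ^{t−1} ρ_{1:t} r_t ]. Let S ⊆ {1, …, T} be the set of indices t with m_t > 0 and tc/2 ≥ 2F + log 2 − log m_t. Then Var( ∑_{t=1}^T γ^{t−1} ρ_{1:t} r_t ) ≥ ∑_{t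 ∈ S} ( γ^{2t−2} m_t² / 4 ) exp( t c² / (8 d²) ) − (v^π)². -/
open MeasureTheory Finset

private lemma exp_mul_le_aux {l d x : ℝ} (hd : 0 < d) (hx : |x| ≤ d) :
    Real.exp (l * x) ≤ Real.cosh (l * d) + Real.sinh (l * d) / d * x := by
  have hx1 : -d ≤ x := neg_le_of_abs_le hx
  have hx2 : x ≤ d := le_of_abs_le hx
  have ha : 0 ≤ (d + x) / (2 * d) := div_nonneg (by linarith) (by linarith)
  have hb : 0 ≤ (d - x) / (2 * d) := by
    exact div_nonneg (by linarith) (by linarith)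
  have hab : (d + x) / (2 * d) + (d - x) / (2 * d) = 1 := by
    field_simp; ring
  have h := convexOn_exp.2 (Set.mem_univ (l * d)) (Set.mem_univ (-(l * d))) ha hb hab
  simp only [smul_eq_mul] at h
  have h1 : (d + x) / (2 * d) * (l * d) + (d - x) / (2 * d) * -(l * d) = l * x := by
    field_simp; ring
  have h2 : (d + x) / (2 * d) * Real.exp (l * d) + (d - x) / (2 * d) * Real.exp (-(l * d)) =
      Real.cosh (l * d) + Real.sinh (l * d) / d * x := by
    rw [Real.cosh_eq, Real.sinh_eq]; field_simp; ring
  rw [h1, h2] at h; exact h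

private lemma azuma_tail_bound {Ω : Type*} {m0 : MeasurableSpace Ω} (P : Measure Ω)
    [IsProbabilityMeasure P] (ℱ : MeasureTheory.Filtration ℕ m0)
    (M : ℕ → Ω → ℝ) (hM : Martingale M ℱ P) (hM0 : ∀ ω, M 0 ω = 0)
    (T : ℕ) (d : ℝ) (hd : 0 < d)
    (hbdd : ∀ t, 1 ≤ t → t ≤ T → ∀ᵐ ω ∂P, |M t ω - M (t - 1) ω| ≤ d)
    (c : ℝ) (hc : 0 < c) (t : ℕ) (ht1 : 1 ≤ t) (ht : t ≤ T) :
    (P {ω | (t : ℝ) * c / 2 ≤ M t ω}).toReal ≤ Real.exp (-((t : ℝ) * c ^ 2 / (8 * d ^ 2))) := by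
  -- a.e. bound |M s| ≤ s * d for s ≤ T
  have hMb : ∀ s, s ≤ T → ∀ᵐ ω ∂P, |M s ω| ≤ s * d := by
    intro s
    induction s with
    | zero => intro _; filter_upwards with ω; simp [hM0]
    | succ n ih =>
      intro h
      filter_upwards [ih (Nat.le_of_succ_le h), hbdd (n + 1) (Nat.succ_le_succ (Nat.zero_le n)) h]
        with ω h1 h2
      simp only [Nat.add_sub_cancel] at h2
      have h3 : |M (n + 1) ω| ≤ |M (n + 1) ω - M n ω| + |M n ω| := by
        calc |M (n + 1) ω| = |(M (n + 1) ω - M n ω) + M n ω| := by ring_nf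
          _ ≤ _ := abs_add_le _ _
      push_cast
      nlinarith
  -- measurability and integrability of exp(s * M u)
  have hMmeas : ∀ u, StronglyMeasurable (M u) := fun u => (hM.stronglyAdapted u).mono (ℱ.le u)
  have hint : ∀ u, u ≤ T → ∀ s : ℝ, Integrable (fun ω => Real.exp (s * M u ω)) P := by
    intro u hu s
    refine Integrable.mono' (integrable_const (Real.exp (|s| * (u * d))))
      (Real.continuous_exp.comp_stronglyMeasurable
        ((hMmeas u).const_mul s)).aestronglyMeasurable ?_
    filter_upwards [hMb u hu] with ω hω
    rw [Real.norm_of_nonneg (Real.exp_pos _).le, Real.exp_le_exp]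
    calc s * M u ω ≤ |s * M u ω| := le_abs_self _
      _ = |s| * |M u ω| := abs_mul _ _
      _ ≤ |s| * (u * d) := by
          exact mul_le_mul_of_nonneg_left hω (abs_nonneg s)
  set l : ℝ := c / (2 * d ^ 2) with hl_def
  have hl : 0 < l := by positivity
  -- mgf bound by induction
  have key : ∀ u, u ≤ T → ∫ ω, Real.exp (l * M u ω) ∂P ≤ Real.cosh (l * d) ^ u := by
    intro u
    induction u with
    | zero => intro _; simp [hM0]
    | succ n ih =>
      intro h
      have hn : n ≤ T := Nat.le_of_succ_le h
      have hΔbdd : ∀ᵐ ω ∂P, |M (n + 1) ω - M n ω| ≤ d := by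
        have := hbdd (n + 1) (Nat.succ_le_succ (Nat.zero_le n)) h
        simpa using this
      have hintn : Integrable (fun ω => Real.exp (l * M n ω)) P := hint n hn l
      have hintn1 : Integrable (fun ω => Real.exp (l * M (n + 1) ω)) P := hint (n + 1) h l
      have hintΔ' : Integrable (fun ω => M (n + 1) ω - M n ω) P :=
        (hM.integrable (n + 1)).sub (hM.integrable n)
      have hΔmeas : AEStronglyMeasurable (fun ω => Real.exp (l * (M (n + 1) ω - M n ω))) P :=
        (Real.continuous_exp.comp_stronglyMeasurable
          (((hMmeas (n + 1)).sub (hMmeas n)).const_mul l)).aestronglyMeasurable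
      have hintΔexp : Integrable (fun ω => Real.exp (l * (M (n + 1) ω - M n ω))) P := by
        refine Integrable.mono' (integrable_const (Real.exp (l * d))) hΔmeas ?_
        filter_upwards [hΔbdd] with ω hω
        rw [Real.norm_of_nonneg (Real.exp_pos _).le, Real.exp_le_exp]
        calc l * (M (n + 1) ω - M n ω) ≤ l * |M (n + 1) ω - M n ω| :=
              mul_le_mul_of_nonneg_left (le_abs_self _) hl.le
          _ ≤ l * d := mul_le_mul_of_nonneg_left hω hl.le
      -- condexp of the increment is 0
      have hcondΔ0 : P[(fun ω => M (n + 1) ω - M n ω) | ℱ n] =ᵐ[P] 0 := by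
        have e1 : P[M (n + 1) - M n | ℱ n] =ᵐ[P] P[M (n + 1) | ℱ n] - P[M n | ℱ n] :=
          condExp_sub (hM.integrable (n + 1)) (hM.integrable n) (ℱ n)
        have e2 := hM.condExp_ae_eq (Nat.le_succ n)
        have e3 : P[M n | ℱ n] = M n :=
          condExp_of_stronglyMeasurable (ℱ.le n) (hM.stronglyAdapted n) (hM.integrable n)
        filter_upwards [e1, e2] with ω q1 q2
        have q3 : (P[M n | ℱ n]) ω = M n ω := by rw [e3]
        have : (fun ω => M (n + 1) ω - M n ω) = M (n + 1) - M n := rfl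
        rw [this, q1]
        simp [q2, q3]
      -- condexp of exp(l Δ) ≤ cosh(l d)
      have hcond : P[(fun ω => Real.exp (l * (M (n + 1) ω - M n ω))) | ℱ n]
          ≤ᵐ[P] fun _ => Real.cosh (l * d) := by
        have hintg : Integrable
            (fun ω => Real.cosh (l * d) + Real.sinh (l * d) / d * (M (n + 1) ω - M n ω)) P :=
          (integrable_const _).add (hintΔ'.const_mul _)
        have h4 := condExp_mono (m := ℱ n) hintΔexp hintg
          (by filter_upwards [hΔbdd] with ω hω using exp_mul_le_aux hd hω)
        have h5 : P[(fun ω => Real.cosh (l * d) +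
              Real.sinh (l * d) / d * (M (n + 1) ω - M n ω)) | ℱ n]
            =ᵐ[P] fun ω => Real.cosh (l * d) +
              Real.sinh (l * d) / d * (P[(fun ω => M (n + 1) ω - M n ω) | ℱ n]) ω := by
          have q1 := condExp_add (μ := P) (m := ℱ n)
            (integrable_const (Real.cosh (l * d))) (hintΔ'.const_mul (Real.sinh (l * d) / d))
          have q2 := condExp_smul (μ := P) (m := ℱ n) (Real.sinh (l * d) / d)
            (fun ω => M (n + 1) ω - M n ω)
          have w3 := condExp_const (μ := P) (ℱ.le n) (Real.cosh (l * d))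
          filter_upwards [q1, q2] with ω w1 w2
          have e : (fun ω => Real.cosh (l * d) + Real.sinh (l * d) / d * (M (n + 1) ω - M n ω))
              = (fun _ => Real.cosh (l * d)) +
                fun ω => Real.sinh (l * d) / d * (M (n + 1) ω - M n ω) := rfl
          rw [e, w1]
          have e2 : (fun ω => Real.sinh (l * d) / d * (M (n + 1) ω - M n ω))
              = (Real.sinh (l * d) / d) • fun ω => M (n + 1) ω - M n ω := rfl
          simp only [Pi.add_apply, w3, e2, w2, Pi.smul_apply, smul_eq_mul]
        filter_upwards [h4, h5, hcondΔ0] with ω w4 w5 w0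
        rw [w5] at w4
        simpa [w0] using w4
      -- pull-out and iterate
      have expmeas : StronglyMeasurable[ℱ n] fun ω => Real.exp (l * M n ω) :=
        Real.continuous_exp.comp_stronglyMeasurable ((hM.stronglyAdapted n).const_mul l)
      have hprod : (fun ω => Real.exp (l * M (n + 1) ω)) =
          (fun ω => Real.exp (l * M n ω)) * fun ω => Real.exp (l * (M (n + 1) ω - M n ω)) := by
        funext ω
        simp only [Pi.mul_apply, ← Real.exp_add]
        ring_nf
      have hmul : Integrable ((fun ω => Real.exp (l * M n ω)) *
          fun ω => Real.exp (l * (M (n + 1) ω - M n ω))) P := by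
        rw [← hprod]; exact hintn1
      have hpull := condExp_mul_of_stronglyMeasurable_left (μ := P) expmeas hmul hintΔexp
      have step : ∫ ω, Real.exp (l * M (n + 1) ω) ∂P
          ≤ Real.cosh (l * d) * ∫ ω, Real.exp (l * M n ω) ∂P := by
        calc ∫ ω, Real.exp (l * M (n + 1) ω) ∂P
            = ∫ ω, (P[(fun ω => Real.exp (l * M n ω)) *
                fun ω => Real.exp (l * (M (n + 1) ω - M n ω)) | ℱ n]) ω ∂P := by
              rw [integral_condExp (ℱ.le n), ← hprod]
          _ ≤ ∫ ω, Real.cosh (l * d) * Real.exp (l * M n ω) ∂P := by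
              refine integral_mono_ae integrable_condExp (hintn.const_mul _) ?_
              filter_upwards [hpull, hcond] with ω w1 w2
              rw [w1]
              simp only [Pi.mul_apply]
              rw [mul_comm (Real.cosh (l * d))]
              exact mul_le_mul_of_nonneg_left w2 (Real.exp_pos _).le
          _ = Real.cosh (l * d) * ∫ ω, Real.exp (l * M n ω) ∂P := integral_const_mul _ _
      calc ∫ ω, Real.exp (l * M (n + 1) ω) ∂P
          ≤ Real.cosh (l * d) * ∫ ω, Real.exp (l * M n ω) ∂P := step
        _ ≤ Real.cosh (l * d) * Real.cosh (l * d) ^ n :=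
            mul_le_mul_of_nonneg_left (ih hn) (Real.cosh_pos _).le
        _ = Real.cosh (l * d) ^ (n + 1) := by ring
  -- Markov / Chernoff
  have hmarkov := mul_meas_ge_le_integral_of_nonneg
    (μ := P) (f := fun ω => Real.exp (l * M t ω))
    (ae_of_all _ fun ω => (Real.exp_pos _).le) (hint t ht l)
    (Real.exp (l * ((t : ℝ) * c / 2)))
  have hset : {ω | Real.exp (l * ((t : ℝ) * c / 2)) ≤ Real.exp (l * M t ω)}
      = {ω | (t : ℝ) * c / 2 ≤ M t ω} := by
    ext ω
    simp only [Set.mem_setOf_eq, Real.exp_le_exp]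
    exact mul_le_mul_iff_right₀ hl
  rw [hset] at hmarkov
  have hcosh : Real.cosh (l * d) ^ t ≤ Real.exp ((t : ℝ) * (l ^ 2 * d ^ 2 / 2)) := by
    calc Real.cosh (l * d) ^ t ≤ Real.exp ((l * d) ^ 2 / 2) ^ t :=
          pow_le_pow_left₀ (Real.cosh_pos _).le (Real.cosh_le_exp_half_sq _) t
      _ = Real.exp ((t : ℝ) * ((l * d) ^ 2 / 2)) := by rw [← Real.exp_nat_mul]
      _ = Real.exp ((t : ℝ) * (l ^ 2 * d ^ 2 / 2)) := by ring_nf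
  have hchain : Real.exp (l * ((t : ℝ) * c / 2)) * (P {ω | (t : ℝ) * c / 2 ≤ M t ω}).toReal
      ≤ Real.exp ((t : ℝ) * (l ^ 2 * d ^ 2 / 2)) := le_trans hmarkov ((key t ht).trans hcosh)
  have hεpos : (0 : ℝ) < Real.exp (l * ((t : ℝ) * c / 2)) := Real.exp_pos _
  have := (le_div_iff₀' hεpos).mpr hchain
  calc (P {ω | (t : ℝ) * c / 2 ≤ M t ω}).toReal
      ≤ Real.exp ((t : ℝ) * (l ^ 2 * d ^ 2 / 2)) / Real.exp (l * ((t : ℝ) * c / 2)) := this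
    _ = Real.exp ((t : ℝ) * (l ^ 2 * d ^ 2 / 2) - l * ((t : ℝ) * c / 2)) :=
        (Real.exp_sub _ _).symm
    _ = Real.exp (-((t : ℝ) * c ^ 2 / (8 * d ^ 2))) := by
        congr 1
        rw [hl_def]
        field_simp
        ring

/-- In the likelihood-ratio filtration setup, suppose
`log ρ_{1:t} = −tc + D_t + M_t` for each `1 ≤ t ≤ T`, where `M` is a martingale with
`M_0 = 0` and increments bounded by `d`, and `|D_t| ≤ 2F` a.s. With
`m_t := E[ρ_{1:t} r_t]` (each `ρ_{1:t} r_t` square-integrable),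
`v^π := E[∑_t γ^{t−1} ρ_{1:t} r_t]`, and `S` the set of `t ∈ {1,…,T}` with `m_t > 0`
and `tc/2 ≥ 2F + log 2 − log m_t`, we have
`Var(v̂_PDIS) ≥ ∑_{t∈S} (γ^{2t−2} m_t²/4) exp(tc²/(8d²)) − (v^π)²`,
with `Var(X) := E[X²] − (E[X])²`. -/
theorem pdis_variance_exponential_lower_bound
    {Ω : Type*} {m0 : MeasurableSpace Ω} (P : Measure Ω) [IsProbabilityMeasure P]
    (T : ℕ) (ℱ : MeasureTheory.Filtration ℕ m0)
    (γ : ℝ) (hγ : γ ∈ Set.Ioc (0 : ℝ) 1)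
    (ρ : ℕ → Ω → ℝ)
    (hρ_meas : ∀ t, 1 ≤ t → t ≤ T → Measurable[ℱ t] (ρ t))
    (hρ_nonneg : ∀ t ω, 0 ≤ ρ t ω)
    (hρ_int : ∀ t, 1 ≤ t → t ≤ T → Integrable (ρ t) P)
    (hρ_cond : ∀ t, 1 ≤ t → t ≤ T → P[ρ t | ℱ (t - 1)] =ᵐ[P] fun _ => (1 : ℝ))
    (ρprod : ℕ → Ω → ℝ)
    (hρprod : ∀ t ω, ρprod t ω = ∏ k ∈ Icc 1 t, ρ k ω)
    (r : ℕ → Ω → ℝ)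
    (hr_meas : ∀ t, 1 ≤ t → t ≤ T → Measurable[ℱ t] (r t))
    (hr_range : ∀ t ω, r t ω ∈ Set.Icc (0 : ℝ) 1)
    (c d F : ℝ) (hc_pos : 0 < c) (hd_pos : 0 < d) (hF_nonneg : 0 ≤ F)
    (M : ℕ → Ω → ℝ) (hM : Martingale M ℱ P) (hM0 : ∀ ω, M 0 ω = 0)
    (hM_bdd : ∀ t, 1 ≤ t → t ≤ T → ∀ᵐ ω ∂P, |M t ω - M (t - 1) ω| ≤ d)
    (D : ℕ → Ω → ℝ) (hD_bdd : ∀ t, 1 ≤ t → t ≤ T → ∀ᵐ ω ∂P, |D t ω| ≤ 2 * F)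
    (h_decomp : ∀ t, 1 ≤ t → t ≤ T →
      ∀ᵐ ω ∂P, Real.log (ρprod t ω) = -(t : ℝ) * c + D t ω + M t ω)
    (m' : ℕ → ℝ) (hm' : ∀ t, m' t = ∫ ω, ρprod t ω * r t ω ∂P)
    (h_sq : ∀ t, 1 ≤ t → t ≤ T → MemLp (fun ω => ρprod t ω * r t ω) 2 P)
    (vπ : ℝ)
    (hvπ : vπ = ∫ ω, ∑ t ∈ Icc 1 T, γ ^ (t - 1) * ρprod t ω * r t ω ∂P)
    (S : Finset ℕ)
    (hS : ∀ t, t ∈ S ↔ t ∈ Icc 1 T ∧ 0 < m' t ∧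
      (t : ℝ) * c / 2 ≥ 2 * F + Real.log 2 - Real.log (m' t)) :
    (∫ ω, (∑ t ∈ Icc 1 T, γ ^ (t - 1) * ρprod t ω * r t ω) ^ 2 ∂P) - vπ ^ 2
      ≥ (∑ t ∈ S, γ ^ (2 * t - 2) * (m' t) ^ 2 / 4
          * Real.exp ((t : ℝ) * c ^ 2 / (8 * d ^ 2))) - vπ ^ 2 := by
  obtain ⟨hγ0, hγ1⟩ := hγ
  have hρp_nonneg : ∀ t ω, 0 ≤ ρprod t ω := by
    intro t ω
    rw [hρprod]
    exact Finset.prod_nonneg fun k _ => hρ_nonneg k ω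
  have hf_nonneg : ∀ t ω, 0 ≤ ρprod t ω * r t ω := fun t ω =>
    mul_nonneg (hρp_nonneg t ω) (hr_range t ω).1
  -- per-t lower bound on the second moment
  have hper : ∀ t ∈ S, (m' t) ^ 2 / 4 * Real.exp ((t : ℝ) * c ^ 2 / (8 * d ^ 2))
      ≤ ∫ ω, (ρprod t ω * r t ω) ^ 2 ∂P := by
    intro t htS
    obtain ⟨htIcc, hm_pos, hcnd⟩ := (hS t).1 htS
    obtain ⟨ht1, htT⟩ := mem_Icc.1 htIcc
    have hf2 : MemLp (fun ω => ρprod t ω * r t ω) 2 P := h_sq t ht1 htT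
    have hf_int : Integrable (fun ω => ρprod t ω * r t ω) P := hf2.integrable one_le_two
    set A := {ω | (t : ℝ) * c / 2 ≤ M t ω} with hA_def
    have hA_meas : MeasurableSet A :=
      measurableSet_le measurable_const ((hM.stronglyAdapted t).mono (ℱ.le t)).measurable
    have htail := azuma_tail_bound P ℱ M hM hM0 T d hd_pos hM_bdd c hc_pos t ht1 htT
    -- the complement contributes at most m/2
    have hAc_bound : ∀ᵐ ω ∂P, Aᶜ.indicator (fun ω => ρprod t ω * r t ω) ω ≤ m' t / 2 := by
      filter_upwards [h_decomp t ht1 htT, hD_bdd t ht1 htT] with ω hdec hDb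
      by_cases hω : ω ∈ Aᶜ
      · rw [Set.indicator_of_mem hω]
        have hM_lt : M t ω < (t : ℝ) * c / 2 := by
          have := hω
          simp only [Set.mem_compl_iff, hA_def, Set.mem_setOf_eq, not_le] at this
          exact this
        have hρ_le : ρprod t ω ≤ m' t / 2 := by
          rcases eq_or_lt_of_le (hρp_nonneg t ω) with hzero | hpos
          · rw [← hzero]; positivity
          · have hD : D t ω ≤ 2 * F := le_of_abs_le hDb
            have hlogm2 : Real.log (m' t / 2) = Real.log (m' t) - Real.log 2 :=
              Real.log_div hm_pos.ne' two_ne_zero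
            have hlog : Real.log (ρprod t ω) ≤ Real.log (m' t / 2) := by
              rw [hdec, hlogm2]
              linarith [hcnd]
            calc ρprod t ω = Real.exp (Real.log (ρprod t ω)) := (Real.exp_log hpos).symm
              _ ≤ Real.exp (Real.log (m' t / 2)) := Real.exp_le_exp.2 hlog
              _ = m' t / 2 := Real.exp_log (by positivity)
        calc ρprod t ω * r t ω ≤ ρprod t ω * 1 :=
              mul_le_mul_of_nonneg_left (hr_range t ω).2 (hρp_nonneg t ω)
          _ = ρprod t ω := mul_one _
          _ ≤ m' t / 2 := hρ_le
      · rw [Set.indicator_of_notMem hω]; positivity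
    have hsplit : ∫ ω, ρprod t ω * r t ω ∂P
        = (∫ ω, A.indicator (fun ω => ρprod t ω * r t ω) ω ∂P)
          + ∫ ω, Aᶜ.indicator (fun ω => ρprod t ω * r t ω) ω ∂P := by
      rw [← integral_add (hf_int.indicator hA_meas) (hf_int.indicator hA_meas.compl)]
      congr 1
      funext ω
      by_cases h : ω ∈ A <;> simp [Set.indicator_of_mem, Set.indicator_of_notMem, h]
    have hAc_le : ∫ ω, Aᶜ.indicator (fun ω => ρprod t ω * r t ω) ω ∂P ≤ m' t / 2 := by
      calc ∫ ω, Aᶜ.indicator (fun ω => ρprod t ω * r t ω) ω ∂P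
          ≤ ∫ _ω, m' t / 2 ∂P :=
            integral_mono_ae (hf_int.indicator hA_meas.compl) (integrable_const _) hAc_bound
        _ = m' t / 2 := by simp
    have hA_lower : m' t / 2 ≤ ∫ ω, A.indicator (fun ω => ρprod t ω * r t ω) ω ∂P := by
      have hmm := hm' t
      linarith [hsplit]
    -- Cauchy–Schwarz
    have hg2 : MemLp (A.indicator fun _ => (1 : ℝ)) 2 P :=
      memLp_indicator_const 2 hA_meas 1 (Or.inr (measure_ne_top P A))
    have h22 : ENNReal.ofReal (2 : ℝ) = 2 := by norm_num
    have hCS := integral_mul_le_Lp_mul_Lq_of_nonneg (μ := P)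
      (f := fun ω => ρprod t ω * r t ω) (g := A.indicator fun _ => (1 : ℝ))
      Real.HolderConjugate.two_two
      (ae_of_all _ fun ω => hf_nonneg t ω)
      (ae_of_all _ fun ω => Set.indicator_nonneg (fun _ _ => zero_le_one) ω)
      (h22 ▸ hf2) (h22 ▸ hg2)
    have hfg : (fun ω => (ρprod t ω * r t ω) * (A.indicator fun _ => (1 : ℝ)) ω)
        = A.indicator (fun ω => ρprod t ω * r t ω) := by
      funext ω
      by_cases h : ω ∈ A <;> simp [Set.indicator_of_mem, Set.indicator_of_notMem, h]
    have hgsq : ∫ ω, (A.indicator fun _ => (1 : ℝ)) ω ^ (2 : ℝ) ∂P = (P A).toReal := by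
      have : (fun ω => (A.indicator fun _ => (1 : ℝ)) ω ^ (2 : ℝ))
          = A.indicator fun _ => (1 : ℝ) := by
        funext ω
        by_cases h : ω ∈ A <;>
          simp [Set.indicator_of_mem, Set.indicator_of_notMem, h,
            Real.zero_rpow (two_ne_zero (α := ℝ)), Real.one_rpow]
      rw [this, integral_indicator_const _ hA_meas, smul_eq_mul, mul_one, measureReal_def]
    have hfsq : (fun ω => (ρprod t ω * r t ω) ^ (2 : ℝ)) = fun ω => (ρprod t ω * r t ω) ^ 2 := by
      funext ω
      rw [← Real.rpow_natCast (ρprod t ω * r t ω) 2]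
      norm_num
    set X : ℝ := ∫ ω, (ρprod t ω * r t ω) ^ 2 ∂P with hX_def
    have hX_nonneg : 0 ≤ X := integral_nonneg fun ω => sq_nonneg _
    have hp_nonneg : (0 : ℝ) ≤ (P A).toReal := ENNReal.toReal_nonneg
    have hCS' : m' t / 2 ≤ X ^ (1 / 2 : ℝ) * (P A).toReal ^ (1 / 2 : ℝ) := by
      calc m' t / 2 ≤ ∫ ω, A.indicator (fun ω => ρprod t ω * r t ω) ω ∂P := hA_lower
        _ = ∫ ω, (ρprod t ω * r t ω) * (A.indicator fun _ => (1 : ℝ)) ω ∂P := by rw [hfg]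
        _ ≤ (∫ ω, (ρprod t ω * r t ω) ^ (2 : ℝ) ∂P) ^ (1 / 2 : ℝ)
            * (∫ ω, (A.indicator fun _ => (1 : ℝ)) ω ^ (2 : ℝ) ∂P) ^ (1 / 2 : ℝ) := hCS
        _ = X ^ (1 / 2 : ℝ) * (P A).toReal ^ (1 / 2 : ℝ) := by rw [hgsq, hfsq]
    have hsq' : (m' t / 2) ^ 2 ≤ X * (P A).toReal := by
      have hrhs : (X ^ (1 / 2 : ℝ) * (P A).toReal ^ (1 / 2 : ℝ)) ^ 2 = X * (P A).toReal := by
        rw [mul_pow, ← Real.rpow_natCast (X ^ (1 / 2 : ℝ)) 2,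
          ← Real.rpow_natCast ((P A).toReal ^ (1 / 2 : ℝ)) 2,
          ← Real.rpow_mul hX_nonneg, ← Real.rpow_mul hp_nonneg]
        norm_num
      calc (m' t / 2) ^ 2 ≤ (X ^ (1 / 2 : ℝ) * (P A).toReal ^ (1 / 2 : ℝ)) ^ 2 := by
            apply pow_le_pow_left₀ (by positivity) hCS'
        _ = X * (P A).toReal := hrhs
    have hfinal : (m' t / 2) ^ 2 ≤ X * Real.exp (-((t : ℝ) * c ^ 2 / (8 * d ^ 2))) :=
      hsq'.trans (mul_le_mul_of_nonneg_left htail hX_nonneg)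
    have hepos : (0 : ℝ) < Real.exp ((t : ℝ) * c ^ 2 / (8 * d ^ 2)) := Real.exp_pos _
    have : (m' t / 2) ^ 2 * Real.exp ((t : ℝ) * c ^ 2 / (8 * d ^ 2)) ≤ X := by
      have hx : X * Real.exp (-((t : ℝ) * c ^ 2 / (8 * d ^ 2)))
          * Real.exp ((t : ℝ) * c ^ 2 / (8 * d ^ 2)) = X := by
        rw [mul_assoc, ← Real.exp_add]
        simp
      calc (m' t / 2) ^ 2 * Real.exp ((t : ℝ) * c ^ 2 / (8 * d ^ 2))
          ≤ X * Real.exp (-((t : ℝ) * c ^ 2 / (8 * d ^ 2)))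
            * Real.exp ((t : ℝ) * c ^ 2 / (8 * d ^ 2)) :=
            mul_le_mul_of_nonneg_right hfinal hepos.le
        _ = X := hx
    calc (m' t) ^ 2 / 4 * Real.exp ((t : ℝ) * c ^ 2 / (8 * d ^ 2))
        = (m' t / 2) ^ 2 * Real.exp ((t : ℝ) * c ^ 2 / (8 * d ^ 2)) := by ring
      _ ≤ X := this
  -- assemble
  rw [ge_iff_le, sub_le_sub_iff_right]
  have hterm_mem : ∀ t ∈ Icc 1 T,
      MemLp (fun ω => γ ^ (t - 1) * ρprod t ω * r t ω) 2 P := by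
    intro t htm
    obtain ⟨h1, h2⟩ := mem_Icc.1 htm
    have := (h_sq t h1 h2).const_mul (γ ^ (t - 1))
    simpa [mul_assoc] using this
  have hX_mem : MemLp (fun ω => ∑ t ∈ Icc 1 T, γ ^ (t - 1) * ρprod t ω * r t ω) 2 P :=
    memLp_finset_sum (Icc 1 T) hterm_mem
  have hX_sq_int : Integrable
      (fun ω => (∑ t ∈ Icc 1 T, γ ^ (t - 1) * ρprod t ω * r t ω) ^ 2) P :=
    hX_mem.integrable_sq
  have hS_sub : S ⊆ Icc 1 T := fun t htm => ((hS t).1 htm).1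
  have hterm_sq_int : ∀ t ∈ S,
      Integrable (fun ω => (γ ^ (t - 1) * ρprod t ω * r t ω) ^ 2) P :=
    fun t htm => (hterm_mem t (hS_sub htm)).integrable_sq
  calc ∑ t ∈ S, γ ^ (2 * t - 2) * m' t ^ 2 / 4 * Real.exp ((t : ℝ) * c ^ 2 / (8 * d ^ 2))
      ≤ ∑ t ∈ S, ∫ ω, (γ ^ (t - 1) * ρprod t ω * r t ω) ^ 2 ∂P := by
        refine Finset.sum_le_sum fun t htm => ?_
        obtain ⟨ht1, htT⟩ := mem_Icc.1 (hS_sub htm)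
        have hpow : ∀ ω, (γ ^ (t - 1) * ρprod t ω * r t ω) ^ 2
            = γ ^ (2 * t - 2) * (ρprod t ω * r t ω) ^ 2 := by
          intro ω
          have : γ ^ (t - 1) * ρprod t ω * r t ω = γ ^ (t - 1) * (ρprod t ω * r t ω) := by ring
          rw [this, mul_pow, ← pow_mul]
          congr 2
          omega
        have hI : ∫ ω, (γ ^ (t - 1) * ρprod t ω * r t ω) ^ 2 ∂P
            = γ ^ (2 * t - 2) * ∫ ω, (ρprod t ω * r t ω) ^ 2 ∂P := by
          simp_rw [hpow]
          exact integral_const_mul _ _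
        rw [hI]
        have h1 : γ ^ (2 * t - 2) * m' t ^ 2 / 4 * Real.exp ((t : ℝ) * c ^ 2 / (8 * d ^ 2))
            = γ ^ (2 * t - 2) * (m' t ^ 2 / 4 * Real.exp ((t : ℝ) * c ^ 2 / (8 * d ^ 2))) := by
          ring
        rw [h1]
        exact mul_le_mul_of_nonneg_left (hper t htm) (by positivity)
    _ = ∫ ω, ∑ t ∈ S, (γ ^ (t - 1) * ρprod t ω * r t ω) ^ 2 ∂P :=
        (integral_finset_sum _ hterm_sq_int).symm
    _ ≤ ∫ ω, (∑ t ∈ Icc 1 T, γ ^ (t - 1) * ρprod t ω * r t ω) ^ 2 ∂P := by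
        refine integral_mono (integrable_finset_sum _ hterm_sq_int) hX_sq_int fun ω => ?_
        have hnn : ∀ t ∈ Icc 1 T, 0 ≤ γ ^ (t - 1) * ρprod t ω * r t ω := by
          intro t _
          exact mul_nonneg (mul_nonneg (pow_nonneg hγ0.le _) (hρp_nonneg t ω)) (hr_range t ω).1
        calc ∑ t ∈ S, (γ ^ (t - 1) * ρprod t ω * r t ω) ^ 2
            ≤ ∑ t ∈ Icc 1 T, (γ ^ (t - 1) * ρprod t ω * r t ω) ^ 2 :=
              Finset.sum_le_sum_of_subset_of_nonneg hS_sub fun i _ _ => sq_nonneg _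
          _ ≤ (∑ t ∈ Icc 1 T, γ ^ (t - 1) * ρprod t ω * r t ω) ^ 2 :=
              sum_sq_le_sq_sum_of_nonneg hnn
end

section
/- Let (Ω, ℱ, P) be a probability space, T ∈ ℕ, γ ∈ (0,1], let w_1, …, w_T and w̃_1, …, w̃_T be nonnegative square-integrable random variables with E[(w_t − w̃_t)²] ≤ ε_w for all t and some ε_w ≥ 0, and let r_1, …, r_T : Ω → [0,1] be random variables. Set V := ∑_{t=1}^T γ^{t−1} w̃_t r_t, v := E[V], and V̂ := ∑_{t=1}^T γ^{t−1} w_t r_t. Then the mean squared error of V̂ satisfies E[(V̂ − v)²] ≤ 2 Var(V) + 2 T² ε_w. -/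
open MeasureTheory Finset

/-- MSE bound for approximate stationary importance sampling. With exact
weights `w̃_t` and approximate weights `w_t` satisfying `E[(w_t − w̃_t)²] ≤ ε_w`, setting
`V := ∑ γ^{t−1} w̃_t r_t`, `v := E[V]`, `V̂ := ∑ γ^{t−1} w_t r_t`, we have
`E[(V̂ − v)²] ≤ 2 Var(V) + 2 T² ε_w`, where `Var(X) := E[X²] − (E[X])²`. -/
theorem approximate_sis_mse_bound
    {Ω : Type*} {m0 : MeasurableSpace Ω} (P : Measure Ω) [IsProbabilityMeasure P]
    (T : ℕ) (γ : ℝ) (hγ : γ ∈ Set.Ioc (0 : ℝ) 1)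
    (w w' : ℕ → Ω → ℝ)
    (hw_nonneg : ∀ t ω, 0 ≤ w t ω) (hw'_nonneg : ∀ t ω, 0 ≤ w' t ω)
    (hw_meas : ∀ t, Measurable (w t)) (hw'_meas : ∀ t, Measurable (w' t))
    (hw_sq : ∀ t, MemLp (w t) 2 P) (hw'_sq : ∀ t, MemLp (w' t) 2 P)
    (εw : ℝ) (hεw : 0 ≤ εw)
    (h_err : ∀ t, (∫ ω, (w t ω - w' t ω) ^ 2 ∂P) ≤ εw)
    (r : ℕ → Ω → ℝ)
    (hr_meas : ∀ t, Measurable (r t))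
    (hr_range : ∀ t ω, r t ω ∈ Set.Icc (0 : ℝ) 1)
    (V Vhat : Ω → ℝ) (v : ℝ)
    (hV : ∀ ω, V ω = ∑ t ∈ Icc 1 T, γ ^ (t - 1) * w' t ω * r t ω)
    (hv : v = ∫ ω, V ω ∂P)
    (hVhat : ∀ ω, Vhat ω = ∑ t ∈ Icc 1 T, γ ^ (t - 1) * w t ω * r t ω) :
    (∫ ω, (Vhat ω - v) ^ 2 ∂P)
      ≤ 2 * ((∫ ω, (V ω) ^ 2 ∂P) - (∫ ω, V ω ∂P) ^ 2) + 2 * T ^ 2 * εw := by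
  obtain ⟨hγ0, hγ1⟩ := hγ
  -- pointwise bounds on coefficients
  have hcoef : ∀ t : ℕ, ∀ ω, ∀ u : ℕ → Ω → ℝ, (0 ≤ u t ω) →
      ‖γ ^ (t - 1) * u t ω * r t ω‖ ≤ 1 * ‖u t ω‖ := by
    intro t ω u hu
    have hγp : (0:ℝ) ≤ γ ^ (t-1) := by positivity
    have hγle : γ ^ (t-1) ≤ 1 := pow_le_one₀ hγ0.le hγ1
    obtain ⟨hr0, hr1⟩ := hr_range t ω
    rw [one_mul, Real.norm_eq_abs, Real.norm_eq_abs, abs_of_nonneg (by positivity),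
      abs_of_nonneg hu]
    have h1 : γ ^ (t-1) * r t ω ≤ 1 := mul_le_one₀ hγle hr0 hr1
    have h2 := mul_le_mul_of_nonneg_right h1 hu
    nlinarith
  -- MemLp of summands
  have hterm : ∀ (u : ℕ → Ω → ℝ), (∀ t ω, 0 ≤ u t ω) → (∀ t, Measurable (u t)) →
      (∀ t, MemLp (u t) 2 P) → ∀ t,
      MemLp (fun ω => γ ^ (t - 1) * u t ω * r t ω) 2 P := by
    intro u hu humeas husq t
    refine MemLp.of_le_mul (husq t) ?_ (Filter.Eventually.of_forall fun ω => hcoef t ω u (hu t ω))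
    exact (((measurable_const.mul (humeas t)).mul (hr_meas t))).aestronglyMeasurable
  have hVmem : MemLp V 2 P := by
    refine MemLp.ae_eq ?_ (memLp_finset_sum (Icc 1 T)
      (f := fun t ω => γ ^ (t - 1) * w' t ω * r t ω)
      (fun t _ => hterm w' hw'_nonneg hw'_meas hw'_sq t))
    exact Filter.Eventually.of_forall fun ω => (hV ω).symm
  have hVhatmem : MemLp Vhat 2 P := by
    refine MemLp.ae_eq ?_ (memLp_finset_sum (Icc 1 T)
      (f := fun t ω => γ ^ (t - 1) * w t ω * r t ω)
      (fun t _ => hterm w hw_nonneg hw_meas hw_sq t))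
    exact Filter.Eventually.of_forall fun ω => (hVhat ω).symm
  -- integrability facts
  have hVint : Integrable V P := hVmem.integrable one_le_two
  have hVsq : Integrable (fun ω => V ω ^ 2) P := hVmem.integrable_sq
  have hD : Integrable (fun ω => (Vhat ω - V ω) ^ 2) P :=
    (hVhatmem.sub hVmem).integrable_sq
  have hVv : Integrable (fun ω => (V ω - v) ^ 2) P :=
    (hVmem.sub (memLp_const v)).integrable_sq
  have hVhatv : Integrable (fun ω => (Vhat ω - v) ^ 2) P :=
    (hVhatmem.sub (memLp_const v)).integrable_sq
  have hdiffsq : ∀ t : ℕ, Integrable (fun ω => (w t ω - w' t ω) ^ 2) P :=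
    fun t => ((hw_sq t).sub (hw'_sq t)).integrable_sq
  have hsum : Integrable (fun ω => (T:ℝ) * ∑ t ∈ Icc 1 T, (w t ω - w' t ω) ^ 2) P :=
    (integrable_finset_sum (Icc 1 T) (fun t _ => hdiffsq t)).const_mul _
  -- Step 1: split
  have step1 : (∫ ω, (Vhat ω - v) ^ 2 ∂P)
      ≤ 2 * (∫ ω, (Vhat ω - V ω) ^ 2 ∂P) + 2 * (∫ ω, (V ω - v) ^ 2 ∂P) := by
    have hadd : Integrable (fun ω => 2 * (Vhat ω - V ω) ^ 2 + 2 * (V ω - v) ^ 2) P :=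
      (hD.const_mul 2).add (hVv.const_mul 2)
    have := integral_mono hVhatv hadd
      (fun ω => by nlinarith [sq_nonneg ((Vhat ω - V ω) - (V ω - v))])
    rwa [integral_add (hD.const_mul 2) (hVv.const_mul 2),
      integral_const_mul, integral_const_mul] at this
  -- Step 2: variance identity
  have step2 : (∫ ω, (V ω - v) ^ 2 ∂P) = (∫ ω, V ω ^ 2 ∂P) - (∫ ω, V ω ∂P) ^ 2 := by
    have hA : Integrable (fun ω => V ω ^ 2 - 2 * v * V ω) P :=
      hVsq.sub (hVint.const_mul _)
    have expand : ∀ ω, (V ω - v) ^ 2 = (V ω ^ 2 - 2 * v * V ω) + v ^ 2 := fun ω => by ring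
    calc (∫ ω, (V ω - v) ^ 2 ∂P)
        = ∫ ω, ((V ω ^ 2 - 2 * v * V ω) + v ^ 2) ∂P := by
          exact integral_congr_ae (Filter.Eventually.of_forall expand)
      _ = (∫ ω, (V ω ^ 2 - 2 * v * V ω) ∂P) + ∫ _, v ^ 2 ∂P :=
          integral_add hA (integrable_const _)
      _ = (∫ ω, V ω ^ 2 ∂P) - (∫ ω, 2 * v * V ω ∂P) + v ^ 2 := by
          rw [integral_sub hVsq (hVint.const_mul _), integral_const, probReal_univ,
            smul_eq_mul, one_mul]
      _ = (∫ ω, V ω ^ 2 ∂P) - (∫ ω, V ω ∂P) ^ 2 := by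
          rw [integral_const_mul, hv]; ring
  -- Step 3: error bound
  have step3 : (∫ ω, (Vhat ω - V ω) ^ 2 ∂P) ≤ (T:ℝ) ^ 2 * εw := by
    have ptwise : ∀ ω, (Vhat ω - V ω) ^ 2
        ≤ (T:ℝ) * ∑ t ∈ Icc 1 T, (w t ω - w' t ω) ^ 2 := by
      intro ω
      have h1 : |Vhat ω - V ω| ≤ ∑ t ∈ Icc 1 T, |w t ω - w' t ω| := by
        rw [hVhat ω, hV ω, ← Finset.sum_sub_distrib]
        refine (Finset.abs_sum_le_sum_abs _ _).trans (Finset.sum_le_sum fun t _ => ?_)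
        have heq : γ ^ (t-1) * w t ω * r t ω - γ ^ (t-1) * w' t ω * r t ω
            = (γ ^ (t-1) * r t ω) * (w t ω - w' t ω) := by ring
        rw [heq, abs_mul]
        have hγp : (0:ℝ) ≤ γ ^ (t-1) := by positivity
        have hγle : γ ^ (t-1) ≤ 1 := pow_le_one₀ hγ0.le hγ1
        obtain ⟨hr0, hr1⟩ := hr_range t ω
        have hb : |γ ^ (t-1) * r t ω| ≤ 1 := by
          rw [abs_of_nonneg (by positivity)]; exact mul_le_one₀ hγle hr0 hr1
        nlinarith [abs_nonneg (w t ω - w' t ω)]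
      have h2 : (∑ t ∈ Icc 1 T, |w t ω - w' t ω|) ^ 2
          ≤ (#(Icc 1 T) : ℝ) * ∑ t ∈ Icc 1 T, |w t ω - w' t ω| ^ 2 :=
        sq_sum_le_card_mul_sum_sq
      have hcard : #(Icc 1 T) = T := by simp [Nat.card_Icc]
      calc (Vhat ω - V ω) ^ 2 = |Vhat ω - V ω| ^ 2 := (sq_abs _).symm
        _ ≤ (∑ t ∈ Icc 1 T, |w t ω - w' t ω|) ^ 2 :=
            pow_le_pow_left₀ (abs_nonneg _) h1 2
        _ ≤ (T:ℝ) * ∑ t ∈ Icc 1 T, (w t ω - w' t ω) ^ 2 := by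
            simpa [hcard, sq_abs] using h2
    have h3 := integral_mono hD hsum ptwise
    have h4 : (∫ ω, (T:ℝ) * ∑ t ∈ Icc 1 T, (w t ω - w' t ω) ^ 2 ∂P)
        = (T:ℝ) * ∑ t ∈ Icc 1 T, ∫ ω, (w t ω - w' t ω) ^ 2 ∂P := by
      rw [integral_const_mul, integral_finset_sum (Icc 1 T) (fun t _ => hdiffsq t)]
    have h5 : ∑ t ∈ Icc 1 T, (∫ ω, (w t ω - w' t ω) ^ 2 ∂P) ≤ (T:ℝ) * εw := by
      calc ∑ t ∈ Icc 1 T, (∫ ω, (w t ω - w' t ω) ^ 2 ∂P)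
          ≤ ∑ t ∈ Icc 1 T, εw := Finset.sum_le_sum fun t _ => h_err t
        _ = (T:ℝ) * εw := by rw [Finset.sum_const, Nat.card_Icc]; simp
    have hT : (0:ℝ) ≤ T := Nat.cast_nonneg T
    calc (∫ ω, (Vhat ω - V ω) ^ 2 ∂P)
        ≤ (T:ℝ) * ∑ t ∈ Icc 1 T, (∫ ω, (w t ω - w' t ω) ^ 2 ∂P) := by rw [← h4]; exact h3
      _ ≤ (T:ℝ) * ((T:ℝ) * εw) := mul_le_mul_of_nonneg_left h5 hT
      _ = (T:ℝ) ^ 2 * εw := by ring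
  linarith
end
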